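/- arXiv:1710.05430 — 2 statements merged into one kernel-verified Lean document; each statement's English description precedes it below -/
import Mathlib

section
/- There exists c ∈ (0,1], depending only on the Schottky data, with the following property for each choice of sign ±: if f is continuous on D^± := D ∩ {z : ±Im z ≥ 0} and holomorphic on the interior of D^±, then sup over D₂^± of |f| is at most (sup over I of |f|)^c times (sup over D^± of |f|)^{1−c}, where D₂ := ⋃_{words a of length 2} D_a and D₂^± := D₂ ∩ {z : ±Im z ≥ 0}. -/
set_option maxHeartbeats 1000000


open Complex MeasureTheory Metric Set
open scoped Real

noncomputable section


abbrev SL2R := Matrix.SpecialLinearGroup (Fin 2) ℝ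

/-- Entries of a matrix in `SL(2,ℝ)`, as complex numbers. -/
def mA (g : SL2R) : ℂ := ((g.1 0 0 : ℝ) : ℂ)
def mB (g : SL2R) : ℂ := ((g.1 0 1 : ℝ) : ℂ)
def mC (g : SL2R) : ℂ := ((g.1 1 0 : ℝ) : ℂ)
def mD (g : SL2R) : ℂ := ((g.1 1 1 : ℝ) : ℂ)

/-- The Möbius action of `SL(2,ℝ)` on the Riemann sphere `ℂ ∪ {∞}`. -/
def moebius (g : SL2R) : OnePoint ℂ → OnePoint ℂ := fun z =>
  match z with
  | OnePoint.infty => if mC g = 0 then OnePoint.infty else ((mA g / mC g : ℂ) : OnePoint ℂ)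
  | (w : ℂ) => if mC g * w + mD g = 0 then OnePoint.infty
      else (((mA g * w + mB g) / (mC g * w + mD g) : ℂ) : OnePoint ℂ)

/-- The Möbius action on `ℂ`, with junk value at the pole. -/
def moebiusC (g : SL2R) (z : ℂ) : ℂ := (mA g * z + mB g) / (mC g * z + mD g)

/-- The Möbius action on `ℝ`, with junk value at the pole. -/
def moebiusR (g : SL2R) (x : ℝ) : ℝ :=
  (g.1 0 0 * x + g.1 0 1) / (g.1 1 0 * x + g.1 1 1)

/-- The complex derivative `γ'(z) = (cz+d)⁻²` of a Möbius transformation (`det = 1`). -/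
def dMob (g : SL2R) (z : ℂ) : ℂ := ((mC g * z + mD g)⁻¹) ^ 2

/-- The involution `a ↦ ā` on the alphabet `{1, …, 2r}` (as `Fin (2*r)`). -/
def bar {r : ℕ} (a : Fin (2 * r)) : Fin (2 * r) :=
  if h : (a : ℕ) < r then ⟨(a : ℕ) + r, by omega⟩
  else ⟨(a : ℕ) - r, by have := a.isLt; omega⟩

/-- Schottky data: `2r` pairwise disjoint closed disks centered on the real axis and
`2r` elements of `SL(2,ℝ)` with `γ_a((ℂ∪{∞}) \ interior D_{ā}) = D_a`, `γ_ā = γ_a⁻¹`. -/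
structure Schottky (r : ℕ) where
  hr : 1 ≤ r
  center : Fin (2 * r) → ℝ
  radius : Fin (2 * r) → ℝ
  radius_pos : ∀ a, 0 < radius a
  disj : Pairwise fun a b =>
    Disjoint (closedBall ((center a : ℝ) : ℂ) (radius a)) (closedBall ((center b : ℝ) : ℂ) (radius b))
  γ : Fin (2 * r) → SL2R
  γ_bar : ∀ a, γ (bar a) = (γ a)⁻¹
  γ_maps : ∀ a, moebius (γ a) ''
      (univ \ ((fun z : ℂ => (z : OnePoint ℂ)) '' interior (closedBall ((center (bar a) : ℝ) : ℂ) (radius (bar a)))))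
    = (fun z : ℂ => (z : OnePoint ℂ)) '' closedBall ((center a : ℝ) : ℂ) (radius a)

/-- Words: finite sequences of letters with `a_{j+1} ≠ ā_j`. -/
def IsWord {r : ℕ} (w : List (Fin (2 * r))) : Prop := w.Chain' fun x y => y ≠ bar x

/-- The word `ā := ā_n ⋯ ā_1`. -/
def barWord {r : ℕ} (w : List (Fin (2 * r))) : List (Fin (2 * r)) := (w.map bar).reverse

namespace Schottky

variable {r : ℕ} (S : Schottky r)

/-- The disk `D_a` for a letter `a`. -/
def disk (a : Fin (2 * r)) : Set ℂ := closedBall ((S.center a : ℝ) : ℂ) (S.radius a)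

/-- `γ_w := γ_{a_1} ⋯ γ_{a_n}`. -/
def g (w : List (Fin (2 * r))) : SL2R := (w.map S.γ).prod

/-- The disk `D_w := γ_{w'}(D_{a_n})` of a nonempty word, as a subset of the Riemann sphere. -/
def sdisk : List (Fin (2 * r)) → Set (OnePoint ℂ)
  | [] => ∅
  | a :: w => moebius (S.g ((a :: w).dropLast)) ''
      ((fun z : ℂ => (z : OnePoint ℂ)) '' S.disk ((a :: w).getLast (List.cons_ne_nil a w)))

/-- The disk `D_w` as a subset of `ℂ`. -/
def wdisk (w : List (Fin (2 * r))) : Set ℂ := {z : ℂ | (z : OnePoint ℂ) ∈ S.sdisk w}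

/-- The interval `I_w = D_w ∩ ℝ`, as a subset of `ℝ`. -/
def wint (w : List (Fin (2 * r))) : Set ℝ := {x : ℝ | ((x : ℝ) : ℂ) ∈ S.wdisk w}

/-- The length `|I_w|` of the interval `I_w`. -/
def wlen (w : List (Fin (2 * r))) : ℝ := Metric.diam (S.wint w)

/-- `D = ⋃_{a ∈ A} D_a`. -/
def D : Set ℂ := ⋃ a, S.disk a

/-- `I = D ∩ ℝ`, as a subset of `ℝ`. -/
def Ire : Set ℝ := {x : ℝ | ((x : ℝ) : ℂ) ∈ S.D}

/-- `D₂ = ⋃_{|w| = 2} D_w`. -/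
def D₂ : Set ℂ := ⋃ (a : Fin (2 * r)), ⋃ (b : Fin (2 * r)), ⋃ (_ : b ≠ bar a), S.wdisk [a, b]

/-- `I'_a` for a letter `a`: the convex hull of `⋃_{b ≠ ā} I_{ab}`. -/
def iprimeLetter (a : Fin (2 * r)) : Set ℝ :=
  convexHull ℝ (⋃ (b : Fin (2 * r)), ⋃ (_ : b ≠ bar a), S.wint [a, b])

/-- `I'_w := γ_{w'}(I'_{a_n})` for a nonempty word `w`. -/
def iprime : List (Fin (2 * r)) → Set ℝ
  | [] => ∅
  | a :: w => moebiusR (S.g ((a :: w).dropLast)) ''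
      S.iprimeLetter ((a :: w).getLast (List.cons_ne_nil a w))

/-- The partition `Z(τ)`. -/
def Ztau (τ : ℝ) : Set (List (Fin (2 * r))) :=
  {w | w ≠ [] ∧ IsWord w ∧ S.wlen w ≤ τ ∧ (w.dropLast = [] ∨ τ < S.wlen w.dropLast)}

/-- The limit set `Λ_Γ ⊂ ℝ`. -/
def limitSet : Set ℝ :=
  {x : ℝ | ∀ n : ℕ, 1 ≤ n → ∃ w : List (Fin (2 * r)), IsWord w ∧ w.length = n ∧ x ∈ S.wint w}

/-- The τ-neighbourhood `Λ_Γ(τ) ⊂ ℝ` of the limit set. -/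
def limitSetNbhd (τ : ℝ) : Set ℝ := {x : ℝ | ∃ y ∈ S.limitSet, |x - y| ≤ τ}

end Schottky

/-- `ℓ` is a holomorphic branch on `U` of the logarithm of the derivative of the Möbius
transformation of `g`, real on `U ∩ ℝ`. -/
structure IsLogBranch (g : SL2R) (U : Set ℂ) (ℓ : ℂ → ℂ) : Prop where
  holo : DifferentiableOn ℂ ℓ U
  exp_eq : ∀ z ∈ U, Complex.exp (ℓ z) = dMob g z
  real_on : ∀ x : ℝ, ((x : ℝ) : ℂ) ∈ U → (ℓ ((x : ℝ) : ℂ)).im = 0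

/-- A family of branches `ℓ a b` of `log γ_a'` on `D_b`, for all `a ≠ b̄`. -/
def IsBranchFamily {r : ℕ} (S : Schottky r) (ℓ : Fin (2 * r) → Fin (2 * r) → ℂ → ℂ) : Prop :=
  ∀ a b : Fin (2 * r), a ≠ bar b → IsLogBranch (S.γ a) (S.disk b) (ℓ a b)

/-- The fixed-point equation `L_s u = u` on the interior of `D`, written pointwise. -/
def TransferFixed {r : ℕ} (S : Schottky r) (s : ℂ)
    (ℓ : Fin (2 * r) → Fin (2 * r) → ℂ → ℂ) (u : ℂ → ℂ) : Prop :=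
  ∀ b : Fin (2 * r), ∀ z ∈ interior (S.disk b),
    u z = ∑ a : Fin (2 * r), if a ≠ bar b then
      Complex.exp (s * ℓ a b z) * u (moebiusC (S.γ a) z) else 0

/-- The transfer operator `L_s`, as an operator on functions. -/
def transferOp {r : ℕ} (S : Schottky r) (s : ℂ)
    (ℓ : Fin (2 * r) → Fin (2 * r) → ℂ → ℂ) (u : ℂ → ℂ) : ℂ → ℂ := fun z =>
  ∑ b : Fin (2 * r), (S.disk b).indicator
    (fun w => ∑ a : Fin (2 * r), if a ≠ bar b then
      Complex.exp (s * ℓ a b w) * u (moebiusC (S.γ a) w) else 0) z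

/-- A partition: a finite set of nonempty words such that every long enough word
has exactly one prefix in it. -/
def IsPartition {r : ℕ} (S : Schottky r) (Z : Finset (List (Fin (2 * r)))) : Prop :=
  (∀ w ∈ Z, w ≠ [] ∧ IsWord w) ∧
  ∃ N : ℕ, ∀ w : List (Fin (2 * r)), IsWord w → N ≤ w.length →
    ∃! p : List (Fin (2 * r)), p ∈ Z ∧ p <+: w



lemma interp_anti {MI MD x y : ℝ} (h0 : 0 ≤ MI) (h1 : MI ≤ MD) (hx : 0 ≤ x) (hxy : x ≤ y) :
    MI ^ y * MD ^ (1 - y) ≤ MI ^ x * MD ^ (1 - x) := by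
  rcases eq_or_lt_of_le h0 with h0' | h0'
  · rcases eq_or_lt_of_le hx with hx' | hx'
    · rcases eq_or_lt_of_le (hx'.trans_le hxy) with hy' | hy'
      · simp [← hx', ← hy']
      · rw [← h0', Real.zero_rpow (ne_of_gt hy')]
        have : (0:ℝ) ^ x * MD ^ (1 - x) = MD ^ (1-x) := by rw [← hx', Real.rpow_zero, one_mul]
        rw [this, zero_mul]
        exact Real.rpow_nonneg (h0.trans h1) _
    · rw [← h0', Real.zero_rpow (ne_of_gt hx'), Real.zero_rpow (ne_of_gt (hx'.trans_le hxy)),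
        zero_mul, zero_mul]
  · have hMD : 0 < MD := h0'.trans_le h1
    have key : ∀ t : ℝ, MI ^ t * MD ^ (1 - t) = MD * (MI / MD) ^ t := by
      intro t
      rw [Real.div_rpow h0'.le hMD.le, Real.rpow_sub hMD, Real.rpow_one]
      field_simp
    rw [key, key]
    have hq : MI / MD ≤ 1 := (div_le_one hMD).mpr h1
    have hqpos : 0 < MI / MD := div_pos h0' hMD
    exact mul_le_mul_of_nonneg_left (Real.rpow_le_rpow_of_exponent_ge hqpos hq hxy) hMD.le

lemma cos_pi4_ne {s : ℂ} (h : s.re ∈ Icc (0:ℝ) 1) : Complex.cos ((π/4 : ℝ) * s) ≠ 0 := by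
  rw [Complex.cos_ne_zero_iff]
  intro k hk
  have hre : ((π/4 : ℝ) * s).re = (π/4) * s.re := by simp
  have h2 : ((2 * (k:ℂ) + 1) * (π:ℂ) / 2).re = (2*(k:ℝ)+1) * π / 2 := by
    simp
  have := congrArg Complex.re hk
  rw [hre, h2] at this
  have hπ := Real.pi_pos
  rcases le_or_gt 0 (k:ℝ) with hk0 | hk0
  · nlinarith [h.2]
  · have hk2 : k < 0 := by exact_mod_cast hk0
    have hk3 : k ≤ -1 := by omega
    have : (k:ℝ) ≤ -1 := by exact_mod_cast hk3
    nlinarith [h.1]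

lemma sin_cos_comp (u : ℂ) :
    (Complex.sin u).re = Real.sin u.re * Real.cosh u.im ∧
    (Complex.sin u).im = Real.cos u.re * Real.sinh u.im ∧
    (Complex.cos u).re = Real.cos u.re * Real.cosh u.im ∧
    (Complex.cos u).im = -(Real.sin u.re * Real.sinh u.im) := by
  have hS := Complex.sin_eq u
  have hC := Complex.cos_eq u
  refine ⟨?_, ?_, ?_, ?_⟩ <;>
    [rw [hS]; rw [hS]; rw [hC]; rw [hC]] <;>
    simp only [Complex.add_re, Complex.add_im, Complex.sub_re, Complex.sub_im, Complex.mul_re,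
      Complex.mul_im, Complex.ofReal_re, Complex.ofReal_im, Complex.I_re, Complex.I_im,
      Complex.sin_ofReal_re, Complex.sin_ofReal_im, Complex.cos_ofReal_re, Complex.cos_ofReal_im,
      Complex.cosh_ofReal_re, Complex.cosh_ofReal_im, Complex.sinh_ofReal_re,
      Complex.sinh_ofReal_im] <;> ring

/-- All tan facts on the closed strip at once:
norm ≤ 1, re ≥ 0; strict versions on the open strip; re = 0 on the left edge. -/
lemma tan_facts {s : ℂ} (h : s.re ∈ Icc (0:ℝ) 1) :
    ‖Complex.tan ((π/4 : ℝ) * s)‖ ≤ 1 ∧ 0 ≤ (Complex.tan ((π/4 : ℝ) * s)).re ∧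
    (s.re < 1 → ‖Complex.tan ((π/4 : ℝ) * s)‖ < 1) ∧
    (0 < s.re → 0 < (Complex.tan ((π/4 : ℝ) * s)).re) ∧
    (s.re = 0 → (Complex.tan ((π/4 : ℝ) * s)).re = 0) := by
  set u := ((π/4 : ℝ) : ℂ) * s with hu
  have hc := cos_pi4_ne h
  have hx : u.re = (π/4) * s.re := by simp [hu]
  have hy : u.im = (π/4) * s.im := by simp [hu]
  obtain ⟨hSre, hSim, hCre, hCim⟩ := sin_cos_comp u
  set x := u.re
  set y := u.im
  have hπ := Real.pi_pos
  have hx0 : 0 ≤ x := by rw [hx]; exact mul_nonneg (by positivity) h.1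
  have hx1 : x ≤ π/4 := by rw [hx]; nlinarith [h.2]
  have hsin : 0 ≤ Real.sin x := Real.sin_nonneg_of_nonneg_of_le_pi hx0 (by nlinarith)
  have hcos : 0 < Real.cos x := Real.cos_pos_of_mem_Ioo ⟨by nlinarith, by nlinarith⟩
  have hsc : Real.sin x ≤ Real.cos x := by
    calc Real.sin x ≤ Real.sin (π/4) := by
          apply Real.sin_le_sin_of_le_of_le_pi_div_two (by nlinarith) (by nlinarith) hx1
      _ = Real.cos (π/4) := by rw [Real.sin_pi_div_four, Real.cos_pi_div_four]
      _ ≤ Real.cos x := by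
          apply Real.cos_le_cos_of_nonneg_of_le_pi hx0 (by nlinarith) hx1
  have hch : 1 ≤ Real.cosh y := Real.one_le_cosh y
  have hid : Real.cosh y ^ 2 - Real.sinh y ^ 2 = 1 := Real.cosh_sq_sub_sinh_sq y
  have hnC : Complex.normSq (Complex.cos u) =
      Real.cos x ^2 * Real.cosh y ^2 + Real.sin x ^2 * Real.sinh y^2 := by
    rw [Complex.normSq_apply, hCre, hCim]; ring
  have hnS : Complex.normSq (Complex.sin u) =
      Real.sin x ^2 * Real.cosh y ^2 + Real.cos x ^2 * Real.sinh y^2 := by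
    rw [Complex.normSq_apply, hSre, hSim]; ring
  have hnCpos : 0 < Complex.normSq (Complex.cos u) := by
    rw [Complex.normSq_pos]; exact hc
  have hnormsq : ‖Complex.tan u‖^2 = Complex.normSq (Complex.sin u) / Complex.normSq (Complex.cos u) := by
    rw [Complex.tan_eq_sin_div_cos, norm_div, div_pow,
      Complex.sq_norm, Complex.sq_norm]
  have hre : (Complex.tan u).re = Real.sin x * Real.cos x / Complex.normSq (Complex.cos u) := by
    rw [Complex.tan_eq_sin_div_cos, Complex.div_re, hSre, hSim, hCre, hCim, ← add_div]
    congr 1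
    linear_combination Real.sin x * Real.cos x * hid
  refine ⟨?_, ?_, ?_, ?_, ?_⟩
  · have hle : Complex.normSq (Complex.sin u) ≤ Complex.normSq (Complex.cos u) := by
      rw [hnS, hnC]; nlinarith
    have h2 : ‖Complex.tan u‖^2 ≤ 1 := by rw [hnormsq, div_le_one hnCpos]; exact hle
    nlinarith [norm_nonneg (Complex.tan u)]
  · rw [hre]; positivity
  · intro hlt
    have hx1' : x < π/4 := by rw [hx]; nlinarith
    have hsc' : Real.sin x < Real.cos x := by
      calc Real.sin x < Real.sin (π/4) := by
            apply Real.sin_lt_sin_of_lt_of_le_pi_div_two (by nlinarith) (by nlinarith) hx1'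
        _ = Real.cos (π/4) := by rw [Real.sin_pi_div_four, Real.cos_pi_div_four]
        _ ≤ Real.cos x := by
            apply Real.cos_le_cos_of_nonneg_of_le_pi hx0 (by nlinarith) hx1
    have hlt2 : Complex.normSq (Complex.sin u) < Complex.normSq (Complex.cos u) := by
      rw [hnS, hnC]; nlinarith
    have h2 : ‖Complex.tan u‖^2 < 1 := by rw [hnormsq, div_lt_one hnCpos]; exact hlt2
    nlinarith [norm_nonneg (Complex.tan u)]
  · intro hpos
    have hx0' : 0 < x := by rw [hx]; positivity
    have hsin' : 0 < Real.sin x := Real.sin_pos_of_pos_of_lt_pi hx0' (by nlinarith)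
    rw [hre]; positivity
  · intro h0
    have : x = 0 := by rw [hx, h0, mul_zero]
    rw [hre, this, Real.sin_zero, zero_mul, zero_div]


/-- facts about `ζ = (1+p)/(1-p)` for `‖p‖ < 1`. -/
lemma zeta_facts {p : ℂ} (hp : ‖p‖ < 1) :
    0 < ((1+p)/(1-p)).re ∧ ((1+p)/(1-p)).im = 2 * p.im / Complex.normSq (1-p) := by
  have h1 : (1:ℂ) - p ≠ 0 := by
    intro h
    have : p = 1 := by linear_combination -h
    rw [this] at hp; simp at hp
  have hns : 0 < Complex.normSq (1-p) := by rwa [Complex.normSq_pos]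
  have hlt : Complex.normSq p < 1 := by
    have : ‖p‖^2 < 1 := by nlinarith [norm_nonneg p]
    rwa [Complex.sq_norm] at this
  constructor
  · rw [Complex.div_re]
    have hre : (1+p).re * (1-p).re + (1+p).im * (1-p).im = 1 - Complex.normSq p := by
      simp only [Complex.add_re, Complex.add_im, Complex.sub_re, Complex.sub_im, Complex.one_re,
        Complex.one_im, Complex.normSq_apply]
      ring
    rw [← add_div, hre]
    exact div_pos (by linarith) hns
  · rw [Complex.div_im]
    have him : (1+p).im * (1-p).re - (1+p).re * (1-p).im = 2 * p.im := by
      simp only [Complex.add_re, Complex.add_im, Complex.sub_re, Complex.sub_im, Complex.one_re,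
        Complex.one_im]
      ring
    rw [div_sub_div_same, him]

/-- the branch function `h p = arg (((1+p)/(1-p))^2)`; basic facts on the open unit disk. -/
lemma harg_facts {p : ℂ} (hp : ‖p‖ < 1) :
    (0 ≤ p.im → 0 ≤ (((1+p)/(1-p))^2).arg) ∧ (((1+p)/(1-p))^2).arg < π ∧
    ContinuousAt (fun q : ℂ => (((1+q)/(1-q))^2).arg) p := by
  obtain ⟨hre, him⟩ := zeta_facts hp
  set ζ := (1+p)/(1-p) with hζ
  have hwim : (ζ^2).im = 2 * ζ.re * ζ.im := by
    rw [sq, Complex.mul_im]; ring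
  have hwre : ζ.im = 0 → 0 < (ζ^2).re := by
    intro h0
    rw [sq, Complex.mul_re, h0]
    simpa using mul_pos hre hre
  have hslit : ζ^2 ∈ Complex.slitPlane := by
    rw [Complex.mem_slitPlane_iff]
    rcases eq_or_ne ζ.im 0 with h0 | h0
    · exact Or.inl (hwre h0)
    · refine Or.inr ?_
      rw [hwim]
      exact mul_ne_zero (mul_ne_zero two_ne_zero (ne_of_gt hre)) h0
  refine ⟨?_, ?_, ?_⟩
  · intro hpim
    rw [Complex.arg_nonneg_iff, hwim]
    have h2 : 0 ≤ ζ.im := by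
      rw [him]; exact div_nonneg (by linarith) (Complex.normSq_nonneg _)
    exact mul_nonneg (mul_nonneg (by norm_num) hre.le) h2
  · rcases lt_or_eq_of_le ((ζ^2).arg_le_pi) with h | h
    · exact h
    · exfalso
      obtain ⟨hneg, h0⟩ := Complex.arg_eq_pi_iff.mp h
      rw [hwim] at h0
      have hζim : ζ.im = 0 := by
        rcases mul_eq_zero.mp h0 with h' | h'
        · rcases mul_eq_zero.mp h' with h'' | h''
          · norm_num at h''
          · exact absurd h'' (ne_of_gt hre)
        · exact h'
      exact absurd (hwre hζim) (by linarith)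
  · have h1 : (1:ℂ) - p ≠ 0 := by
      intro h
      have : p = 1 := by linear_combination -h
      rw [this] at hp; simp at hp
    have hcont : ContinuousAt (fun q : ℂ => (((1+q)/(1-q))^2 : ℂ)) p := by
      apply ContinuousAt.pow
      exact ContinuousAt.div (continuousAt_const.add continuousAt_id)
        (continuousAt_const.sub continuousAt_id) h1
    exact ContinuousAt.comp (g := Complex.arg) (f := fun q : ℂ => ((1+q)/(1-q))^2) (x := p)
      (Complex.continuousAt_arg hslit) hcont

/-- Surjectivity: every point of the open upper half-disk is `i·tan((π/4)s)` for some `s`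
in the closed strip with `re s = arg(((1+p)/(1-p))²)/π`. -/
lemma strip_surj {p : ℂ} (hp : ‖p‖ < 1) (hpim : 0 ≤ p.im) :
    ∃ s : ℂ, s.re = (((1+p)/(1-p))^2).arg / π ∧
      I * Complex.tan ((π/4 : ℝ) * s) = p := by
  have hπ := Real.pi_pos
  obtain ⟨hre, him'⟩ := zeta_facts hp
  have h1 : (1:ℂ) - p ≠ 0 := by
    intro h
    have : p = 1 := by linear_combination -h
    rw [this] at hp; simp at hp
  set ζ := (1+p)/(1-p) with hζdef
  have hζim : 0 ≤ ζ.im := by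
    rw [him']; exact div_nonneg (by linarith) (Complex.normSq_nonneg _)
  set w := ζ^2 with hwdef
  have hζ0 : ζ ≠ 0 := fun h => by rw [h] at hre; simp at hre
  have hw0 : w ≠ 0 := pow_ne_zero _ hζ0
  have hargw0 : 0 ≤ w.arg := by
    rw [Complex.arg_nonneg_iff, hwdef, sq, Complex.mul_im]
    nlinarith [hre.le, hζim]
  have hargwpi : w.arg ≤ π := w.arg_le_pi
  refine ⟨-I * Complex.log w / π, ?_, ?_⟩
  · have : (-I * Complex.log w / π).re = (Complex.log w).im / π := by
      simp [Complex.div_re, Complex.normSq_ofReal, Complex.mul_re]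
      field_simp
    rw [this, Complex.log_im]
  · set s := -I * Complex.log w / π with hs
    set q := Complex.exp (Complex.log w / 2) with hq
    have hq2 : q^2 = w := by
      rw [hq, sq, ← Complex.exp_add]
      have h2 : Complex.log w / 2 + Complex.log w / 2 = Complex.log w := by ring
      rw [h2, Complex.exp_log hw0]
    have him2 : (Complex.log w / 2).im = w.arg / 2 := by
      rw [show (2:ℂ) = ((2:ℝ):ℂ) by norm_num, Complex.div_ofReal_im, Complex.log_im]
    have hqre : 0 ≤ q.re := by
      rw [hq, Complex.exp_re, him2]
      apply mul_nonneg (Real.exp_nonneg _)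
      apply Real.cos_nonneg_of_mem_Icc
      constructor <;> [linarith; linarith]
    have hqζ : q = ζ := by
      have hfac : (q - ζ) * (q + ζ) = 0 := by linear_combination hq2 + hwdef
      rcases mul_eq_zero.mp hfac with h' | h'
      · exact sub_eq_zero.mp h'
      · exfalso
        have : q = -ζ := eq_neg_of_add_eq_zero_left h'
        have : q.re = -ζ.re := by rw [this]; simp
        linarith
    have hq1 : q + 1 ≠ 0 := by
      intro h
      have h2 : (q+1).re = 0 := by rw [h]; simp
      simp only [Complex.add_re, Complex.one_re] at h2
      linarith
    set E := Complex.exp (((π/4 : ℝ):ℂ) * s * I) with hE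
    have hE0 : E ≠ 0 := Complex.exp_ne_zero _
    have hπc : (π:ℂ) ≠ 0 := by exact_mod_cast hπ.ne'
    have hE2 : E^2 = q := by
      rw [hE, hq, sq, ← Complex.exp_add]
      congr 1
      rw [hs]
      field_simp
      push_cast
      linear_combination (-(π:ℂ) * Complex.log w) * Complex.I_sq
    have hEinv : Complex.exp (-(((π/4 : ℝ):ℂ) * s) * I) = E⁻¹ := by
      rw [hE, ← Complex.exp_neg]
      congr 1
      ring
    have hsinu : Complex.sin (((π/4 : ℝ):ℂ) * s) = (E⁻¹ - E) * I / 2 := by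
      rw [Complex.sin, hEinv, hE]
    have hcosu : Complex.cos (((π/4 : ℝ):ℂ) * s) = (E + E⁻¹) / 2 := by
      rw [Complex.cos, hEinv, hE]
    have hEsum : E + E⁻¹ ≠ 0 := by
      intro h
      apply hq1
      have : (E + E⁻¹) * E = (q + 1) := by
        field_simp
        linear_combination hE2
      rw [h, zero_mul] at this
      exact this.symm
    have key : I * Complex.tan (((π/4 : ℝ):ℂ) * s) = (q - 1)/(q + 1) := by
      have hb : ((E + E⁻¹)/2 : ℂ) ≠ 0 := div_ne_zero hEsum two_ne_zero
      have hEG : E * E⁻¹ = 1 := mul_inv_cancel₀ hE0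
      rw [Complex.tan_eq_sin_div_cos, hsinu, hcosu]
      rw [eq_div_iff hq1, mul_div_assoc', div_mul_eq_mul_div, div_eq_iff hb]
      linear_combination ((E⁻¹ - E)*(q+1)/2) * Complex.I_sq + E⁻¹ * hE2 - E * hEG
    rw [show ((π/4 : ℝ):ℂ) * s = (((π/4 : ℝ)):ℂ) * s from rfl] at key
    rw [key, hqζ, hζdef]
    field_simp
    ring

open Complex.HadamardThreeLines in
lemma halfdisk_bound (x ρ : ℝ) (hρ : 0 < ρ) (K : Set ℂ) (hK : IsCompact K)
    (hKb : K ⊆ ball ((x:ℝ):ℂ) ρ) :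
    ∃ c ∈ Set.Ioc (0:ℝ) 1, ∀ σ : ℝ, σ = 1 ∨ σ = -1 → ∀ f : ℂ → ℂ, ∀ MI MD : ℝ,
      0 ≤ MI → MI ≤ MD →
      ContinuousOn f (closedBall ((x:ℝ):ℂ) ρ ∩ {z | 0 ≤ σ * z.im}) →
      (∀ z ∈ ball ((x:ℝ):ℂ) ρ ∩ {z : ℂ | 0 < σ * z.im}, DifferentiableAt ℂ f z) →
      (∀ t : ℝ, |t - x| ≤ ρ → ‖f ((t:ℝ):ℂ)‖ ≤ MI) →
      (∀ z ∈ closedBall ((x:ℝ):ℂ) ρ ∩ {z : ℂ | 0 ≤ σ * z.im}, ‖f z‖ ≤ MD) →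
      ∀ z ∈ K, 0 ≤ σ * z.im → ‖f z‖ ≤ MI ^ c * MD ^ (1 - c) := by
  have hπ := Real.pi_pos
  set J : Set ℂ := ((fun z => (z - x)/ρ) '' K) ∪ ((fun z => -((z - x)/ρ)) '' K) with hJ
  have hJc : IsCompact J := by
    apply IsCompact.union
    · exact hK.image (by fun_prop)
    · exact hK.image (by fun_prop)
  have hρC : ((ρ:ℝ):ℂ) ≠ 0 := by exact_mod_cast hρ.ne'
  have hJb : ∀ p ∈ J, ‖p‖ < 1 := by
    rintro p (⟨z, hz, rfl⟩ | ⟨z, hz, rfl⟩) <;>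
    · have hd : ‖z - ((x:ℝ):ℂ)‖ < ρ := by
        have := hKb hz
        rwa [mem_ball, dist_eq_norm] at this
      simp only [norm_neg, norm_div, Complex.norm_real, Real.norm_eq_abs, abs_of_pos hρ]
      rw [div_lt_one hρ]
      exact hd
  set J' : Set ℂ := J ∩ {p : ℂ | 0 ≤ p.im} with hJ'
  have hJ'c : IsCompact J' := hJc.inter_right (isClosed_le continuous_const Complex.continuous_im)
  set h : ℂ → ℝ := fun p => (((1+p)/(1-p))^2).arg with hh
  have hconth : ContinuousOn h J' := fun p hp =>
    ((harg_facts (hJb p hp.1)).2.2).continuousWithinAt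
  have hbddA : ∀ p ∈ J', h p ≤ sSup (h '' J') := by
    intro p hp
    rcases J'.eq_empty_or_nonempty with he | hne
    · rw [he] at hp; exact absurd hp (notMem_empty p)
    · obtain ⟨pm, hpm, hmax⟩ := hJ'c.exists_isMaxOn hne hconth
      exact le_csSup ⟨h pm, by rintro _ ⟨q, hq, rfl⟩; exact hmax hq⟩ ⟨p, hp, rfl⟩
  set A := sSup (h '' J') with hA
  have hA0 : 0 ≤ A := by
    rcases J'.eq_empty_or_nonempty with he | hne
    · rw [hA, he, image_empty, Real.sSup_empty]
    · apply Real.sSup_nonneg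
      rintro _ ⟨p, hp, rfl⟩
      exact (harg_facts (hJb p hp.1)).1 hp.2
  have hAπ : A < π := by
    rcases J'.eq_empty_or_nonempty with he | hne
    · rw [hA, he, image_empty, Real.sSup_empty]; exact hπ
    · obtain ⟨pm, hpm, hmax⟩ := hJ'c.exists_isMaxOn hne hconth
      have : A ≤ h pm := csSup_le (hne.image h) (by rintro _ ⟨q, hq, rfl⟩; exact hmax hq)
      exact lt_of_le_of_lt this ((harg_facts (hJb pm hpm.1)).2.1)
  refine ⟨1 - A/π, ⟨by rw [sub_pos, div_lt_one hπ]; exact hAπ,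
    by linarith [div_nonneg hA0 hπ.le]⟩, ?_⟩
  intro σ hσ f MI MD hMI0 hMIMD hfc hfd hI hD z hzK hzim
  have hσ1 : |σ| = 1 := by rcases hσ with h | h <;> simp [h]
  have hσ2 : σ * σ = 1 := by rcases hσ with h | h <;> simp [h] <;> norm_num
  set p : ℂ := (σ:ℝ) * (z - x) / ρ with hp
  have hpJ : p ∈ J := by
    rcases hσ with h | h
    · left; exact ⟨z, hzK, by rw [hp, h]; push_cast; ring⟩
    · right; exact ⟨z, hzK, by rw [hp, h]; push_cast; ring⟩
  have hpJ' : p ∈ J' := by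
    refine ⟨hpJ, ?_⟩
    have : p.im = σ * z.im / ρ := by
      rw [hp]
      simp [Complex.div_im, Complex.mul_im, Complex.normSq_ofReal]
      field_simp
    simp only [mem_setOf_eq, this]
    positivity
  have hpb : ‖p‖ < 1 := hJb p hpJ
  obtain ⟨s₀, hs₀re, hs₀tan⟩ := strip_surj hpb hpJ'.2
  -- the map from the strip to the half-disk
  set φ : ℂ → ℂ := fun s => ((x:ℝ):ℂ) + ((ρ:ℝ):ℂ) * ((σ:ℝ):ℂ) * (I * Complex.tan (((π/4:ℝ):ℂ) * s)) with hφ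
  have him_eq : ∀ s : ℂ, (φ s).im = ρ * σ * (Complex.tan (((π/4:ℝ):ℂ) * s)).re := by
    intro s
    rw [hφ]
    simp only [Complex.add_im, Complex.ofReal_im, Complex.mul_im, Complex.mul_re,
      Complex.ofReal_re, Complex.I_re, Complex.I_im]
    ring
  have hdist : ∀ s : ℂ, dist (φ s) ((x:ℝ):ℂ) = ρ * ‖Complex.tan (((π/4:ℝ):ℂ) * s)‖ := by
    intro s
    rw [dist_eq_norm, hφ]
    have : ((x:ℝ):ℂ) + ((ρ:ℝ):ℂ) * ((σ:ℝ):ℂ) * (I * Complex.tan (((π/4:ℝ):ℂ) * s)) - ((x:ℝ):ℂ)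
        = ((ρ:ℝ):ℂ) * ((σ:ℝ):ℂ) * (I * Complex.tan (((π/4:ℝ):ℂ) * s)) := by ring
    rw [this]
    simp only [norm_mul, Complex.norm_real, Real.norm_eq_abs, Complex.norm_I, hσ1,
      abs_of_pos hρ]
    ring
  have hmem : ∀ s ∈ verticalClosedStrip 0 1, φ s ∈ closedBall ((x:ℝ):ℂ) ρ ∩ {w : ℂ | 0 ≤ σ * w.im} := by
    intro s hs
    obtain ⟨ht1, ht2, _, _, _⟩ := tan_facts hs
    constructor
    · rw [mem_closedBall, hdist]
      nlinarith [norm_nonneg (Complex.tan (((π/4:ℝ):ℂ) * s))]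
    · simp only [mem_setOf_eq, him_eq]
      have : σ * (ρ * σ * (Complex.tan (((π/4:ℝ):ℂ) * s)).re)
          = ρ * (Complex.tan (((π/4:ℝ):ℂ) * s)).re := by
        rw [show σ * (ρ * σ * (Complex.tan (((π/4:ℝ):ℂ) * s)).re)
          = (σ * σ) * ρ * (Complex.tan (((π/4:ℝ):ℂ) * s)).re by ring, hσ2]; ring
      rw [this]
      positivity
  have hmem_open : ∀ s ∈ verticalStrip 0 1, φ s ∈ ball ((x:ℝ):ℂ) ρ ∩ {w : ℂ | 0 < σ * w.im} := by
    intro s hs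
    have hs' : s.re ∈ Icc (0:ℝ) 1 := ⟨hs.1.le, hs.2.le⟩
    obtain ⟨_, _, ht3, ht4, _⟩ := tan_facts hs'
    constructor
    · rw [mem_ball, hdist]
      nlinarith [ht3 hs.2]
    · simp only [mem_setOf_eq, him_eq]
      have : σ * (ρ * σ * (Complex.tan (((π/4:ℝ):ℂ) * s)).re)
          = ρ * (Complex.tan (((π/4:ℝ):ℂ) * s)).re := by
        rw [show σ * (ρ * σ * (Complex.tan (((π/4:ℝ):ℂ) * s)).re)
          = (σ * σ) * ρ * (Complex.tan (((π/4:ℝ):ℂ) * s)).re by ring, hσ2]; ring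
      rw [this]
      exact mul_pos hρ (ht4 hs.1)
  have hφdiff : ∀ s : ℂ, s.re ∈ Icc (0:ℝ) 1 → DifferentiableAt ℂ φ s := by
    intro s hs
    apply DifferentiableAt.add (differentiableAt_const _)
    apply DifferentiableAt.mul (differentiableAt_const _)
    apply DifferentiableAt.mul (differentiableAt_const _)
    have : DifferentiableAt ℂ Complex.tan (((π/4:ℝ):ℂ) * s) :=
      Complex.differentiableAt_tan.mpr (cos_pi4_ne hs)
    exact this.comp s ((differentiableAt_const _).mul differentiableAt_id)
  set G : ℂ → ℂ := fun s => f (φ s) with hG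
  have hφcont : ContinuousOn φ (verticalClosedStrip 0 1) :=
    fun s hs => ((hφdiff s hs).continuousAt).continuousWithinAt
  have hGd : DiffContOnCl ℂ G (verticalStrip 0 1) := by
    constructor
    · intro s hs
      apply DifferentiableAt.differentiableWithinAt
      exact (hfd _ (hmem_open s hs)).comp s (hφdiff s ⟨hs.1.le, hs.2.le⟩)
    · have hsub : closure (verticalStrip 0 1) ⊆ verticalClosedStrip 0 1 := by
        apply closure_minimal _ (IsClosed.preimage Complex.continuous_re isClosed_Icc)
        intro w hw
        exact ⟨le_of_lt hw.1, le_of_lt hw.2⟩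
      exact (hfc.comp hφcont (fun s hs => hmem s hs)).mono hsub
  have hGB : BddAbove ((norm ∘ G) '' verticalClosedStrip 0 1) := by
    refine ⟨MD, ?_⟩
    rintro _ ⟨s, hs, rfl⟩
    exact hD _ (hmem s hs)
  have ha : ∀ s ∈ Complex.re ⁻¹' {(0:ℝ)}, ‖G s‖ ≤ MI := by
    intro s hs
    have hs0 : s.re = 0 := hs
    have hsIcc : s.re ∈ Icc (0:ℝ) 1 := by rw [hs0]; exact ⟨le_refl _, by norm_num⟩
    obtain ⟨ht1, _, _, _, ht5⟩ := tan_facts hsIcc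
    have himz : (φ s).im = 0 := by rw [him_eq, ht5 hs0, mul_zero]
    have hreal : φ s = (((φ s).re : ℝ) : ℂ) := by
      apply Complex.ext <;> simp [himz]
    have hdd : |(φ s).re - x| ≤ ρ := by
      have := hdist s
      have h2 : dist (φ s) ((x:ℝ):ℂ) ≤ ρ := by
        rw [this]
        nlinarith [norm_nonneg (Complex.tan (((π/4:ℝ):ℂ) * s))]
      rw [dist_eq_norm, hreal] at h2
      rw [← Complex.ofReal_sub, Complex.norm_real, Real.norm_eq_abs] at h2
      exact h2
    calc ‖G s‖ = ‖f (((φ s).re : ℝ) : ℂ)‖ := by rw [hG]; rw [← hreal]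
      _ ≤ MI := hI _ hdd
  have hb : ∀ s ∈ Complex.re ⁻¹' {(1:ℝ)}, ‖G s‖ ≤ MD := by
    intro s hs
    have hs1 : s.re = 1 := hs
    exact hD _ (hmem s (by rw [verticalClosedStrip, mem_preimage, hs1]; exact ⟨by norm_num, le_refl _⟩))
  have hs₀strip : s₀ ∈ verticalClosedStrip 0 1 := by
    rw [verticalClosedStrip, mem_preimage, hs₀re]
    constructor
    · apply div_nonneg _ hπ.le
      exact (harg_facts hpb).1 hpJ'.2
    · rw [div_le_one hπ]
      exact Complex.arg_le_pi _
  have hkey := norm_le_interp_of_mem_verticalClosedStrip' zero_lt_one hs₀strip hGd hGB ha hb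
  have hGz : G s₀ = f z := by
    show f (φ s₀) = f z
    congr 1
    show ((x:ℝ):ℂ) + ((ρ:ℝ):ℂ) * ((σ:ℝ):ℂ) * (I * Complex.tan (((π/4:ℝ):ℂ) * s₀)) = z
    rw [hs₀tan, hp]
    have hσC : ((σ:ℝ):ℂ) * ((σ:ℝ):ℂ) = 1 := by
      rcases hσ with h | h <;> rw [h] <;> norm_num
    field_simp
    linear_combination (z - ((x:ℝ):ℂ)) * hσC
  rw [hGz] at hkey
  have hcle : 1 - A/π ≤ 1 - s₀.re := by
    have : s₀.re ≤ A / π := by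
      rw [hs₀re]
      exact (div_le_div_iff_of_pos_right hπ).mpr (hbddA p hpJ')
    linarith
  calc ‖f z‖ ≤ MI ^ (1 - s₀.re) * MD ^ s₀.re := by simpa using hkey
    _ = MI ^ (1 - s₀.re) * MD ^ (1 - (1 - s₀.re)) := by ring_nf
    _ ≤ MI ^ (1 - A/π) * MD ^ (1 - (1 - A/π)) := by
        apply interp_anti hMI0 hMIMD _ hcle
        have := (div_lt_one hπ).mpr hAπ
        linarith
    _ = MI ^ (1 - A/π) * MD ^ (A/π) := by ring_nf
    _ = MI ^ (1 - A/π) * MD ^ (1 - (1 - A/π)) := by ring_nf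


section SchottkyLemmas

lemma mob_entries_inv (g : SL2R) :
    mA g⁻¹ = mD g ∧ mB g⁻¹ = -mB g ∧ mC g⁻¹ = -mC g ∧ mD g⁻¹ = mA g := by
  rw [Matrix.SpecialLinearGroup.SL2_inv_expl g]
  unfold mA mB mC mD
  norm_num

lemma mob_det (g : SL2R) : mA g * mD g - mB g * mC g = 1 := by
  have h := g.2
  rw [Matrix.det_fin_two] at h
  unfold mA mB mC mD
  push_cast
  exact_mod_cast congrArg (fun t : ℝ => (t : ℂ)) h

lemma moebius_coe (g : SL2R) (z : ℂ) :
    moebius g (z : OnePoint ℂ) = if mC g * z + mD g = 0 then OnePoint.infty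
      else (((mA g * z + mB g) / (mC g * z + mD g) : ℂ) : OnePoint ℂ) := rfl

lemma moebius_coe' (g : SL2R) (z : ℂ) (h : mC g * z + mD g ≠ 0) :
    moebius g (z : OnePoint ℂ) = ((moebiusC g z : ℂ) : OnePoint ℂ) := by
  rw [moebius_coe, if_neg h]; rfl

lemma moebius_inv (g : SL2R) (z : OnePoint ℂ) : moebius g⁻¹ (moebius g z) = z := by
  obtain ⟨hA, hB, hC, hD⟩ := mob_entries_inv g
  have hdet := mob_det g
  induction z using OnePoint.rec with
  | infty =>
    show moebius g⁻¹ (moebius g OnePoint.infty) = OnePoint.infty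
    by_cases hc : mC g = 0
    · have h1 : moebius g OnePoint.infty = OnePoint.infty := by
        show (if mC g = 0 then _ else _) = _
        rw [if_pos hc]
      rw [h1]
      show (if mC g⁻¹ = 0 then OnePoint.infty else _) = OnePoint.infty
      rw [if_pos (by rw [hC, hc, neg_zero])]
    · have h1 : moebius g OnePoint.infty = ((mA g / mC g : ℂ) : OnePoint ℂ) := by
        show (if mC g = 0 then _ else _) = _
        rw [if_neg hc]
      rw [h1, moebius_coe, if_pos]
      rw [hC, hD]
      field_simp
      ring
  | coe w =>
    by_cases hd : mC g * w + mD g = 0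
    · have hc : mC g ≠ 0 := by
        intro hc0
        rw [hc0, zero_mul, zero_add] at hd
        rw [hc0, hd] at hdet
        norm_num at hdet
      have h1 : moebius g (w : OnePoint ℂ) = OnePoint.infty := by
        rw [moebius_coe, if_pos hd]
      rw [h1]
      show (if mC g⁻¹ = 0 then OnePoint.infty else ((mA g⁻¹ / mC g⁻¹ : ℂ) : OnePoint ℂ)) = _
      rw [if_neg (by rw [hC]; exact neg_ne_zero.mpr hc)]
      rw [hA, hC, OnePoint.coe_eq_coe]
      rw [div_eq_iff (neg_ne_zero.mpr hc)]
      linear_combination hd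
    · rw [moebius_coe' g w hd, moebius_coe]
      have hden : mC g⁻¹ * moebiusC g w + mD g⁻¹ = 1 / (mC g * w + mD g) := by
        rw [hC, hD, moebiusC]
        field_simp
        linear_combination hdet
      rw [if_neg (by rw [hden]; exact one_div_ne_zero hd)]
      rw [OnePoint.coe_eq_coe, hden, hA, hB, moebiusC]
      have hd' : w * mC g + mD g ≠ 0 := by rwa [mul_comm] at hd
      field_simp
      linear_combination w * hdet

lemma bar_val {r : ℕ} (a : Fin (2 * r)) :
    ((bar a : Fin (2*r)) : ℕ) = if (a:ℕ) < r then (a:ℕ) + r else (a:ℕ) - r := by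
  unfold bar; split_ifs <;> rfl

lemma bar_bar {r : ℕ} (a : Fin (2 * r)) : bar (bar a) = a := by
  have := a.isLt
  apply Fin.ext
  rw [bar_val, bar_val]
  split_ifs <;> omega

variable {r : ℕ} (S : Schottky r)

lemma g_single (a : Fin (2 * r)) : S.g [a] = S.γ a := by
  simp [Schottky.g]

lemma sdisk_pair (a b : Fin (2 * r)) :
    S.sdisk [a, b] = moebius (S.γ a) '' ((fun z : ℂ => (z : OnePoint ℂ)) '' S.disk b) := by
  show moebius (S.g [a]) '' _ = _
  rw [g_single]
  rfl

/-- The main geometric lemma about the two-letter disks. -/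
lemma pair_disk {a b : Fin (2 * r)} (hab : b ≠ bar a) :
    IsCompact (S.wdisk [a, b]) ∧
      S.wdisk [a, b] ⊆ ball ((S.center a : ℝ) : ℂ) (S.radius a) := by
  have hdisj : Disjoint (S.disk b) (S.disk (bar a)) := S.disj hab
  have hsub1 : ∀ z ∈ S.disk b, moebius (S.γ a) (z : OnePoint ℂ) ∈
      (fun z : ℂ => (z : OnePoint ℂ)) '' S.disk a := by
    intro z hz
    have hmem : (z : OnePoint ℂ) ∈ univ \ ((fun z : ℂ => (z : OnePoint ℂ)) ''
        interior (closedBall ((S.center (bar a) : ℝ) : ℂ) (S.radius (bar a)))) := by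
      refine ⟨mem_univ _, ?_⟩
      rintro ⟨w, hw, hwz⟩
      rw [OnePoint.coe_eq_coe] at hwz
      subst hwz
      exact (disjoint_left.mp hdisj) hz (interior_subset hw)
    show moebius (S.γ a) (z : OnePoint ℂ) ∈
      (fun z : ℂ => (z : OnePoint ℂ)) '' closedBall ((S.center a : ℝ) : ℂ) (S.radius a)
    rw [← S.γ_maps a]
    exact ⟨(z : OnePoint ℂ), hmem, rfl⟩
  have hden : ∀ z ∈ S.disk b, mC (S.γ a) * z + mD (S.γ a) ≠ 0 := by
    intro z hz h0
    obtain ⟨w, _, hw⟩ := hsub1 z hz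
    rw [moebius_coe, if_pos h0] at hw
    exact OnePoint.coe_ne_infty w hw
  have hC1 : S.wdisk [a, b] = moebiusC (S.γ a) '' S.disk b := by
    ext w
    constructor
    · intro hw
      have : (w : OnePoint ℂ) ∈ S.sdisk [a, b] := hw
      rw [sdisk_pair] at this
      obtain ⟨ζc, ⟨ζ, hζ, rfl⟩, hweq⟩ := this
      rw [moebius_coe' _ _ (hden ζ hζ), OnePoint.coe_eq_coe] at hweq
      exact ⟨ζ, hζ, hweq⟩
    · rintro ⟨ζ, hζ, rfl⟩
      show (_ : OnePoint ℂ) ∈ S.sdisk [a, b]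
      rw [sdisk_pair]
      exact ⟨(ζ : OnePoint ℂ), ⟨ζ, hζ, rfl⟩, (moebius_coe' _ _ (hden ζ hζ))⟩
  have hsubdisk : S.wdisk [a, b] ⊆ S.disk a := by
    rw [hC1]
    rintro _ ⟨ζ, hζ, rfl⟩
    obtain ⟨v, hv, hveq⟩ := hsub1 ζ hζ
    rw [moebius_coe' _ _ (hden ζ hζ), OnePoint.coe_eq_coe] at hveq
    rwa [← hveq]
  constructor
  · rw [hC1]
    apply IsCompact.image_of_continuousOn (isCompact_closedBall _ _)
    apply ContinuousOn.div
    · fun_prop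
    · fun_prop
    · exact hden
  · rw [hC1]
    rintro _ ⟨ζ, hζ, rfl⟩
    set w := moebiusC (S.γ a) ζ with hwdef
    have hwa : w ∈ S.disk a := hsubdisk (by rw [hC1]; exact ⟨ζ, hζ, rfl⟩)
    rw [mem_ball]
    rcases lt_or_eq_of_le (mem_closedBall.mp hwa) with h | h
    · exact h
    · exfalso
      have hnotint : w ∉ interior (closedBall ((S.center a : ℝ) : ℂ) (S.radius a)) := by
        rw [interior_closedBall' _ _, mem_ball]
        exact fun hlt => absurd h (ne_of_lt hlt)
      have hmem2 : (w : OnePoint ℂ) ∈ univ \ ((fun z : ℂ => (z : OnePoint ℂ)) ''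
          interior (closedBall ((S.center (bar (bar a)) : ℝ) : ℂ) (S.radius (bar (bar a))))) := by
        rw [bar_bar]
        refine ⟨mem_univ _, ?_⟩
        rintro ⟨v, hv, hveq⟩
        rw [OnePoint.coe_eq_coe] at hveq
        exact hnotint (hveq ▸ hv)
      have himg : moebius (S.γ (bar a)) (w : OnePoint ℂ) ∈
          (fun z : ℂ => (z : OnePoint ℂ)) '' S.disk (bar a) := by
        show moebius (S.γ (bar a)) (w : OnePoint ℂ) ∈
          (fun z : ℂ => (z : OnePoint ℂ)) '' closedBall ((S.center (bar a) : ℝ) : ℂ) (S.radius (bar a))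
        rw [← S.γ_maps (bar a)]
        exact ⟨(w : OnePoint ℂ), hmem2, rfl⟩
      have hback : moebius (S.γ (bar a)) (w : OnePoint ℂ) = (ζ : OnePoint ℂ) := by
        rw [S.γ_bar a]
        have : (w : OnePoint ℂ) = moebius (S.γ a) (ζ : OnePoint ℂ) :=
          (moebius_coe' _ _ (hden ζ hζ)).symm
        rw [this, moebius_inv]
      rw [hback] at himg
      obtain ⟨v, hv, hveq⟩ := himg
      rw [OnePoint.coe_eq_coe] at hveq
      exact (disjoint_left.mp hdisj) hζ (hveq ▸ hv)

end SchottkyLemmas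

/-- There is `c ∈ (0,1]` depending only on the Schottky data such that for
either sign `σ = ±1`, any `f` continuous on `D^± = D ∩ {±Im z ≥ 0}` and holomorphic on its
interior satisfies `sup_{D₂^±}|f| ≤ (sup_I |f|)^c (sup_{D^±}|f|)^{1−c}`. -/
theorem stmt2 {r : ℕ} (S : Schottky r) :
    ∃ c : ℝ, c ∈ Set.Ioc (0 : ℝ) 1 ∧ ∀ σ : ℝ, σ = 1 ∨ σ = -1 →
      ∀ f : ℂ → ℂ, ContinuousOn f (S.D ∩ {z : ℂ | 0 ≤ σ * z.im}) →
        DifferentiableOn ℂ f (interior (S.D ∩ {z : ℂ | 0 ≤ σ * z.im})) →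
        sSup ((fun z => ‖f z‖) '' (S.D₂ ∩ {z : ℂ | 0 ≤ σ * z.im}))
          ≤ (sSup ((fun x : ℝ => ‖f ((x : ℝ) : ℂ)‖) '' S.Ire)) ^ c *
            (sSup ((fun z => ‖f z‖) '' (S.D ∩ {z : ℂ | 0 ≤ σ * z.im}))) ^ (1 - c) := by
  classical
  have hex : ∀ q : Fin (2*r) × Fin (2*r), ∃ c : ℝ, c ∈ Set.Ioc (0:ℝ) 1 ∧
      (q.2 ≠ bar q.1 → ∀ σ : ℝ, σ = 1 ∨ σ = -1 → ∀ f : ℂ → ℂ, ∀ MI MD : ℝ,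
        0 ≤ MI → MI ≤ MD →
        ContinuousOn f (closedBall ((S.center q.1 : ℝ):ℂ) (S.radius q.1) ∩ {z : ℂ | 0 ≤ σ * z.im}) →
        (∀ z ∈ ball ((S.center q.1 : ℝ):ℂ) (S.radius q.1) ∩ {z : ℂ | 0 < σ * z.im},
          DifferentiableAt ℂ f z) →
        (∀ t : ℝ, |t - S.center q.1| ≤ S.radius q.1 → ‖f ((t:ℝ):ℂ)‖ ≤ MI) →
        (∀ z ∈ closedBall ((S.center q.1 : ℝ):ℂ) (S.radius q.1) ∩ {z : ℂ | 0 ≤ σ * z.im},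
          ‖f z‖ ≤ MD) →
        ∀ z ∈ S.wdisk [q.1, q.2], 0 ≤ σ * z.im → ‖f z‖ ≤ MI ^ c * MD ^ (1 - c)) := by
    intro q
    by_cases hab : q.2 ≠ bar q.1
    · obtain ⟨hcomp, hsub⟩ := pair_disk S hab
      obtain ⟨c, hc, hprop⟩ :=
        halfdisk_bound (S.center q.1) (S.radius q.1) (S.radius_pos q.1) _ hcomp hsub
      exact ⟨c, hc, fun _ => hprop⟩
    · exact ⟨1, ⟨one_pos, le_refl 1⟩, fun h => absurd h hab⟩
  choose cf hcf using hex
  have h2r : 0 < 2 * r := by have := S.hr; omega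
  have hne : Nonempty (Fin (2*r) × Fin (2*r)) := ⟨⟨⟨0, h2r⟩, ⟨0, h2r⟩⟩⟩
  have hfne : (Finset.univ : Finset (Fin (2*r) × Fin (2*r))).Nonempty := Finset.univ_nonempty
  set c := Finset.univ.inf' hfne cf with hcdef
  have hc0 : 0 < c := by
    rw [hcdef, Finset.lt_inf'_iff]
    intro q _
    exact (hcf q).1.1
  have hc1 : c ≤ 1 := by
    obtain ⟨q0⟩ := hne
    exact le_trans (Finset.inf'_le cf (Finset.mem_univ q0)) (hcf q0).1.2
  refine ⟨c, ⟨hc0, hc1⟩, ?_⟩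
  intro σ hσ f hcont hdiff
  set MI := sSup ((fun x : ℝ => ‖f ((x:ℝ):ℂ)‖) '' S.Ire) with hMIdef
  set MD := sSup ((fun z => ‖f z‖) '' (S.D ∩ {z : ℂ | 0 ≤ σ * z.im})) with hMDdef
  have hDclosed_half : IsClosed {z : ℂ | 0 ≤ σ * z.im} :=
    isClosed_le continuous_const (continuous_const.mul Complex.continuous_im)
  have hDcomp : IsCompact (S.D ∩ {z : ℂ | 0 ≤ σ * z.im}) := by
    apply IsCompact.inter_right _ hDclosed_half
    exact isCompact_iUnion (fun a => isCompact_closedBall _ _)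
  have hDbdd : BddAbove ((fun z => ‖f z‖) '' (S.D ∩ {z : ℂ | 0 ≤ σ * z.im})) :=
    (hDcomp.image_of_continuousOn hcont.norm).bddAbove
  have hMD0 : 0 ≤ MD :=
    Real.sSup_nonneg (by rintro _ ⟨z, _, rfl⟩; exact norm_nonneg _)
  have hIresub : ∀ x : ℝ, x ∈ S.Ire → ((x:ℝ):ℂ) ∈ S.D ∩ {z : ℂ | 0 ≤ σ * z.im} := by
    intro x hx
    exact ⟨hx, by simp⟩
  have hMI_le_MD : MI ≤ MD := by
    apply Real.sSup_le _ hMD0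
    rintro _ ⟨t, ht, rfl⟩
    exact le_csSup hDbdd ⟨_, hIresub t ht, rfl⟩
  have hIrebdd : BddAbove ((fun x : ℝ => ‖f ((x:ℝ):ℂ)‖) '' S.Ire) := by
    refine ⟨MD, ?_⟩
    rintro _ ⟨t, ht, rfl⟩
    exact le_csSup hDbdd ⟨_, hIresub t ht, rfl⟩
  have hMI0 : 0 ≤ MI :=
    Real.sSup_nonneg (by rintro _ ⟨t, _, rfl⟩; exact norm_nonneg _)
  have hRHS0 : 0 ≤ MI ^ c * MD ^ (1 - c) :=
    mul_nonneg (Real.rpow_nonneg hMI0 _) (Real.rpow_nonneg hMD0 _)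
  apply Real.sSup_le _ hRHS0
  rintro _ ⟨z, ⟨hz2, hzH⟩, rfl⟩
  simp only [Schottky.D₂, mem_iUnion] at hz2
  obtain ⟨a, b, hab, hzw⟩ := hz2
  have hsubD : closedBall ((S.center a : ℝ):ℂ) (S.radius a) ⊆ S.D := by
    intro w hw
    exact mem_iUnion.mpr ⟨a, hw⟩
  have hfc' : ContinuousOn f (closedBall ((S.center a : ℝ):ℂ) (S.radius a) ∩ {z : ℂ | 0 ≤ σ * z.im}) :=
    hcont.mono (inter_subset_inter_left _ hsubD)
  have hopen : IsOpen (ball ((S.center a : ℝ):ℂ) (S.radius a) ∩ {z : ℂ | 0 < σ * z.im}) :=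
    isOpen_ball.inter (isOpen_lt continuous_const (continuous_const.mul Complex.continuous_im))
  have hU : ball ((S.center a : ℝ):ℂ) (S.radius a) ∩ {z : ℂ | 0 < σ * z.im} ⊆
      interior (S.D ∩ {z : ℂ | 0 ≤ σ * z.im}) := by
    apply interior_maximal _ hopen
    intro w hw
    refine ⟨hsubD (ball_subset_closedBall hw.1), ?_⟩
    show (0:ℝ) ≤ σ * w.im
    exact le_of_lt hw.2
  have hfd' : ∀ w ∈ ball ((S.center a : ℝ):ℂ) (S.radius a) ∩ {z : ℂ | 0 < σ * z.im},
      DifferentiableAt ℂ f w := by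
    intro w hw
    exact (hdiff w (hU hw)).differentiableAt (mem_nhds_iff.mpr ⟨_, hU, hopen, hw⟩)
  have hI' : ∀ t : ℝ, |t - S.center a| ≤ S.radius a → ‖f ((t:ℝ):ℂ)‖ ≤ MI := by
    intro t ht
    have htIre : t ∈ S.Ire := by
      show ((t:ℝ):ℂ) ∈ S.D
      refine mem_iUnion.mpr ⟨a, ?_⟩
      show ((t:ℝ):ℂ) ∈ closedBall ((S.center a : ℝ):ℂ) (S.radius a)
      rw [mem_closedBall, Complex.dist_eq, ← Complex.ofReal_sub, Complex.norm_real, Real.norm_eq_abs]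
      exact ht
    exact le_csSup hIrebdd ⟨t, htIre, rfl⟩
  have hD' : ∀ w ∈ closedBall ((S.center a : ℝ):ℂ) (S.radius a) ∩ {z : ℂ | 0 ≤ σ * z.im},
      ‖f w‖ ≤ MD := fun w hw => le_csSup hDbdd ⟨w, ⟨hsubD hw.1, hw.2⟩, rfl⟩
  have hbound := (hcf (a,b)).2 hab σ hσ f MI MD hMI0 hMI_le_MD hfc' hfd' hI' hD' z hzw hzH
  calc ‖f z‖ ≤ MI ^ cf (a,b) * MD ^ (1 - cf (a,b)) := hbound
    _ ≤ MI ^ c * MD ^ (1 - c) :=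
        interp_anti hMI0 hMI_le_MD (le_of_lt hc0) (Finset.inf'_le cf (Finset.mem_univ (a,b)))
end
end

section
/- Let γ ∈ SL(2,ℝ) with bottom row (c,d), let s ∈ ℂ with Re s < 1/2, and let f : ℝ → ℂ be bounded and measurable. Then for every x ∈ ℝ with cx + d ≠ 0, the integrals defining (B(s)f)(γ(x)) and (B(s)g)(x) converge absolutely, where g(x') := |γ'(x')|_S^{1−s} f(γ(x')) (defined for almost every x', namely when cx'+d ≠ 0), and one has the equivariance identity |γ'(x)|_S^s · (B(s)f)(γ(x)) = (B(s)g)(x). Here t^w := exp(w·log t) for t > 0, w ∈ ℂ. -/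
open Complex MeasureTheory Metric Set
open scoped Real

noncomputable section


/-- `⟨x⟩ = √(1+x²)`. -/
def jap (x : ℝ) : ℝ := Real.sqrt (1 + x ^ 2)

/-- `|x−y|_S = 2|x−y|/(⟨x⟩⟨y⟩)`: the chordal (circle) distance on `ℝ ≃ S¹ ∖ {pt}`. -/
def dS (x y : ℝ) : ℝ := 2 * |x - y| / (jap x * jap y)

/-- The measure `dP(x) = 2⟨x⟩⁻² dx` on `ℝ`. -/
def muP : Measure ℝ := (volume : Measure ℝ).withDensity fun x => ENNReal.ofReal (2 / (1 + x ^ 2))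

/-- `t^w := exp(w log t)` for real `t` and complex `w` (junk value `exp 0 = 1` at `t = 0`). -/
def cpowR (t : ℝ) (w : ℂ) : ℂ := Complex.exp (w * Real.log t)

/-- The operator `B(s)`: `(B(s)f)(x) = |Im s/(2π)|^{1/2} ∫ |x−x'|_S^{−2s} f(x') dP(x')`
(with the junk value `0` when the integral does not converge absolutely). -/
def Bop (s : ℂ) (f : ℝ → ℂ) (x : ℝ) : ℂ :=
  ((Real.sqrt (|s.im| / (2 * π)) : ℝ) : ℂ) * ∫ y, cpowR (dS x y) (-2 * s) * f y ∂muP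

/-- `|γ'(x)|` for the real Möbius transformation of `g` (junk at the pole). -/
def dMobR (g : Matrix.SpecialLinearGroup (Fin 2) ℝ) (x : ℝ) : ℝ := ((g.1 1 0 * x + g.1 1 1)⁻¹) ^ 2


/-- The circle derivative `|γ'(x)|_S := ⟨x⟩²⟨γ(x)⟩⁻²γ'(x)` of a real Möbius transformation. -/
def dMobSR (g : SL2R) (x : ℝ) : ℝ := jap x ^ 2 / jap (moebiusR g x) ^ 2 * dMobR g x


section Stmt6Lemmas

lemma jap_pos (x : ℝ) : 0 < jap x := Real.sqrt_pos.2 (by positivity)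
lemma jap_sq (x : ℝ) : jap x ^ 2 = 1 + x ^ 2 := Real.sq_sqrt (by positivity)
lemma dS_nonneg (x y : ℝ) : 0 ≤ dS x y :=
  div_nonneg (by positivity) (mul_nonneg (jap_pos x).le (jap_pos y).le)
lemma dS_pos {x y : ℝ} (h : x ≠ y) : 0 < dS x y :=
  div_pos (by simp [abs_pos, sub_ne_zero.2 h]) (mul_pos (jap_pos x) (jap_pos y))
lemma dS_le_two (x y : ℝ) : dS x y ≤ 2 := by
  have h1 : 0 < jap x * jap y := mul_pos (jap_pos x) (jap_pos y)
  rw [dS, div_le_iff₀ h1]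
  have hx := jap_sq x; have hy := jap_sq y
  nlinarith [sq_nonneg (1 + x*y), _root_.sq_abs (x-y), abs_nonneg (x - y)]
lemma norm_cpowR (t : ℝ) (w : ℂ) : ‖cpowR t w‖ = Real.exp (w.re * Real.log t) := by
  rw [cpowR, Complex.norm_exp]
  norm_num [Complex.mul_re]

lemma continuous_dS (x : ℝ) : Continuous (fun y => dS x y) := by
  have hjap : Continuous jap := Real.continuous_sqrt.comp (by continuity)
  apply Continuous.div (by continuity)
  · exact continuous_const.mul (hjap.comp continuous_id)
  · intro y; exact (mul_pos (jap_pos x) (jap_pos y)).ne'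

lemma measurable_kernel (x : ℝ) (w : ℂ) : Measurable (fun y => cpowR (dS x y) w) := by
  unfold cpowR
  exact Complex.measurable_exp.comp <| (measurable_const.mul
    (Complex.measurable_ofReal.comp (Real.measurable_log.comp (continuous_dS x).measurable)))

/-- The key real integrability estimate. -/
lemma integrable_h {σ : ℝ} (h0 : 0 < σ) (h1 : σ < 1/2) (X : ℝ) :
    Integrable (fun y => |X - y| ^ (-2*σ) * (1 + y^2) ^ (σ-1)) volume := by
  set r : ℝ := -2*σ with hr
  have hrneg : r < 0 := by rw [hr]; linarith
  have hrgt : -1 < r := by rw [hr]; linarith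
  have hmeas : Measurable (fun y : ℝ => |X - y| ^ r * (1 + y^2) ^ (σ-1)) := by
    apply Measurable.mul
    · exact ((continuous_const.sub continuous_id).abs.measurable).pow_const r |>.mono le_rfl le_rfl
    · exact ((continuous_const.add (continuous_pow 2)).measurable).pow_const (σ-1)
  have hnonneg : ∀ y : ℝ, 0 ≤ |X - y| ^ r * (1 + y^2) ^ (σ-1) := fun y =>
    mul_nonneg (Real.rpow_nonneg (abs_nonneg _) r) (Real.rpow_nonneg (by positivity) _)
  -- interval integrability of |X - y| ^ r on [X-1, X+1]
  have hbase : IntervalIntegrable (fun t : ℝ => t ^ r) volume 0 1 :=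
    intervalIntegral.intervalIntegrable_rpow' hrgt
  have hK1 : IntervalIntegrable (fun t : ℝ => |t| ^ r) volume 0 1 := by
    rw [intervalIntegrable_iff] at hbase ⊢
    refine hbase.congr_fun (fun t ht => ?_) measurableSet_uIoc
    rw [uIoc_of_le zero_le_one] at ht
    rw [abs_of_pos ht.1]
  have hK2 : IntervalIntegrable (fun t : ℝ => |t| ^ r) volume (-1) 0 := by
    rw [IntervalIntegrable.iff_comp_neg]
    simp only [abs_neg, neg_neg, neg_zero]
    exact hK1.symm
  have hK : IntervalIntegrable (fun t : ℝ => |t| ^ r) volume (-1) 1 := hK2.trans hK1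
  have hA' : IntervalIntegrable (fun y : ℝ => |X - y| ^ r) volume (X+1) (X-1) := by
    simpa using hK.comp_sub_left X
  have hA : IntegrableOn (fun y : ℝ => |X - y| ^ r) (Ioc (X-1) (X+1)) volume := by
    rw [← intervalIntegrable_iff_integrableOn_Ioc_of_le (by linarith)]
    exact hA'.symm
  -- Part A
  have partA : IntegrableOn (fun y => |X - y| ^ r * (1 + y^2) ^ (σ-1)) (Ioc (X-1) (X+1)) volume := by
    refine hA.mono' hmeas.aestronglyMeasurable.restrict (ae_of_all _ fun y => ?_)
    rw [Real.norm_eq_abs, _root_.abs_of_nonneg (hnonneg y)]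
    calc |X - y| ^ r * (1 + y^2) ^ (σ-1) ≤ |X - y| ^ r * 1 :=
          mul_le_mul_of_nonneg_left
            (Real.rpow_le_one_of_one_le_of_nonpos (by nlinarith) (by linarith))
            (Real.rpow_nonneg (abs_nonneg _) r)
      _ = |X - y| ^ r := mul_one _
  -- Part B
  have hgB : Integrable (fun y : ℝ => (1 + y^2) ^ (σ-1)) volume := by
    have hfr : ((Module.finrank ℝ ℝ : ℝ)) < 2*(1-σ) := by simp; linarith
    have := integrable_rpow_neg_one_add_norm_sq (E := ℝ) (μ := volume) hfr
    refine this.congr (ae_of_all _ fun y => ?_)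
    show (1 + ‖y‖^2) ^ (-(2*(1-σ))/2) = (1 + y^2) ^ (σ-1)
    rw [Real.norm_eq_abs, _root_.sq_abs]
    congr 1
    ring
  have partB : IntegrableOn (fun y => |X - y| ^ r * (1 + y^2) ^ (σ-1))
      ((Ioc (X-1) (X+1))ᶜ) volume := by
    refine (hgB.restrict).mono' hmeas.aestronglyMeasurable.restrict ?_
    refine ae_restrict_of_forall_mem measurableSet_Ioc.compl fun y hy => ?_
    rw [Real.norm_eq_abs, _root_.abs_of_nonneg (hnonneg y)]
    have h2 : 1 ≤ |X - y| := by
      simp only [mem_compl_iff, mem_Ioc, not_and_or, not_lt, not_le] at hy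
      rcases hy with h | h
      · rw [_root_.abs_of_nonneg (by linarith)]; linarith
      · rw [_root_.abs_of_nonpos (by linarith)]; linarith
    calc |X - y| ^ r * (1 + y^2) ^ (σ-1) ≤ 1 * (1 + y^2) ^ (σ-1) :=
          mul_le_mul_of_nonneg_right
            (Real.rpow_le_one_of_one_le_of_nonpos h2 hrneg.le)
            (Real.rpow_nonneg (by positivity) _)
      _ = (1 + y^2) ^ (σ-1) := one_mul _
  rw [← integrableOn_univ]
  have : (univ : Set ℝ) = Ioc (X-1) (X+1) ∪ (Ioc (X-1) (X+1))ᶜ := (union_compl_self _).symm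
  rw [this]
  exact partA.union partB

/-- Transfer integrability from `muP` to `volume`. -/
lemma integrable_muP_iff {h : ℝ → ℂ} :
    Integrable h muP ↔ Integrable (fun y => (2 / (1 + y^2)) • h y) volume := by
  rw [muP, integrable_withDensity_iff_integrable_smul' (by measurability)
    (ae_of_all _ fun y => ENNReal.ofReal_lt_top)]
  apply integrable_congr
  refine ae_of_all _ fun y => ?_
  show (ENNReal.ofReal (2 / (1 + y^2))).toReal • h y = _
  rw [ENNReal.toReal_ofReal (by positivity)]

lemma integral_muP (h : ℝ → ℂ) :
    ∫ y, h y ∂muP = ∫ y, (2 / (1 + y^2)) • h y := by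
  rw [muP]
  have hm : Measurable fun y : ℝ => (2 / (1 + y^2)).toNNReal := by measurability
  have : (fun x : ℝ => ENNReal.ofReal (2 / (1 + x ^ 2)))
      = fun x : ℝ => ((2 / (1 + x^2)).toNNReal : ENNReal) := rfl
  rw [this, integral_withDensity_eq_integral_smul hm]
  congr 1
  ext y
  rw [NNReal.smul_def, Real.coe_toNNReal _ (by positivity)]

lemma norm_smul_kernel (c : ℝ) (hc : 0 ≤ c) (t : ℝ) (w : ℂ) :
    ‖c • cpowR t w‖ = c * Real.exp (w.re * Real.log t) := by
  rw [norm_smul, Real.norm_eq_abs, _root_.abs_of_nonneg hc, norm_cpowR]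

lemma integrable_kernel (s : ℂ) (hs : s.re < 1/2) (X : ℝ) :
    Integrable (fun y => cpowR (dS X y) (-2*s)) muP := by
  rw [integrable_muP_iff]
  set σ := s.re with hσ
  have hre : (-2*s).re = -2*σ := by simp [hσ]
  have hmeas : AEStronglyMeasurable (fun y : ℝ => (2/(1+y^2)) • cpowR (dS X y) (-2*s)) volume := by
    refine AEStronglyMeasurable.smul (f := fun y : ℝ => 2/(1+y^2)) (g := fun y => cpowR (dS X y) (-2*s)) ?_ ?_
    · exact (Measurable.aestronglyMeasurable (by measurability))
    · exact (measurable_kernel X _).aestronglyMeasurable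
  have hnormval : ∀ y : ℝ, ‖(2/(1+y^2)) • cpowR (dS X y) (-2*s)‖
      = (2/(1+y^2)) * Real.exp ((-2*σ) * Real.log (dS X y)) := by
    intro y
    rw [norm_smul_kernel _ (by positivity), hre]
  rcases le_or_gt σ 0 with hσ0 | hσ0
  · -- bounded kernel case
    set C := max (Real.exp ((-2*σ) * Real.log 2)) 1 with hC
    have hCpos : 0 < C := lt_of_lt_of_le one_pos (le_max_right _ _)
    refine (integrable_inv_one_add_sq.const_mul (2*C)).mono' hmeas (ae_of_all _ fun y => ?_)
    rw [hnormval y]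
    have hb : Real.exp ((-2*σ) * Real.log (dS X y)) ≤ C := by
      rcases eq_or_ne (dS X y) 0 with h | h
      · rw [h, Real.log_zero, mul_zero, Real.exp_zero]; exact le_max_right _ _
      · have hpos : 0 < dS X y := lt_of_le_of_ne (dS_nonneg X y) (Ne.symm h)
        refine le_trans ?_ (le_max_left _ _)
        apply Real.exp_le_exp.2
        apply mul_le_mul_of_nonneg_left (Real.log_le_log hpos (dS_le_two X y)) (by linarith)
      
    calc 2/(1+y^2) * Real.exp ((-2*σ) * Real.log (dS X y)) ≤ 2/(1+y^2) * C :=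
          mul_le_mul_of_nonneg_left hb (by positivity)
      _ = 2*C * (1+y^2)⁻¹ := by ring
  · -- singular kernel case
    set ρ : ℝ := -2*σ with hρ
    set C0 : ℝ := 2 ^ (1+ρ) * jap X ^ (-ρ) with hC0
    have hC0pos : 0 < C0 := by
      have := jap_pos X
      positivity
    have hgint : Integrable (fun y : ℝ => C0 * (|X - y| ^ ρ * (1+y^2) ^ (σ-1))) volume :=
      (integrable_h hσ0 hs X).const_mul C0
    have hae : ∀ᵐ (y : ℝ) ∂(volume : Measure ℝ), y ≠ X := by
      rw [ae_iff]
      have : {y : ℝ | ¬ y ≠ X} = {X} := by ext t; simp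
      rw [this]
      exact measure_singleton X
    refine hgint.mono' hmeas ?_
    filter_upwards [hae] with y hy
    rw [hnormval y]
    have h1 : (0:ℝ) < |X - y| := abs_pos.2 (sub_ne_zero.2 (Ne.symm hy))
    have h2 := jap_pos X; have h3 := jap_pos y
    have hdSpos : 0 < dS X y := dS_pos (Ne.symm hy)
    have key : 2/(1+y^2) * Real.exp (ρ * Real.log (dS X y))
        = C0 * (|X - y| ^ ρ * (1+y^2) ^ (σ-1)) := by
      have hy2 : (0:ℝ) < 1 + y^2 := by positivity
      have hLpos : 0 < 2/(1+y^2) * Real.exp (ρ * Real.log (dS X y)) := by positivity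
      have hRpos : 0 < C0 * (|X - y| ^ ρ * (1+y^2) ^ (σ-1)) := by positivity
      rw [← Real.exp_log hLpos, ← Real.exp_log hRpos]
      congr 1
      rw [Real.log_mul (by positivity) (Real.exp_ne_zero _), Real.log_div (by norm_num) hy2.ne',
        Real.log_exp, hC0,
        Real.log_mul (by positivity) (by positivity),
        Real.log_mul (by positivity) (by positivity),
        Real.log_mul (by positivity) (by positivity),
        Real.log_rpow two_pos, Real.log_rpow h2, Real.log_rpow h1, Real.log_rpow hy2]
      have hlogdS : Real.log (dS X y) = Real.log 2 + Real.log |X - y|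
          - (Real.log (jap X) + Real.log (jap y)) := by
        rw [dS, Real.log_div (by positivity) (by positivity),
          Real.log_mul (by norm_num) h1.ne', Real.log_mul h2.ne' h3.ne']
      have hlog1y : Real.log (1 + y^2) = 2 * Real.log (jap y) := by
        rw [← jap_sq y, Real.log_pow]
        norm_num
      have hlog1X : Real.log (jap X) = Real.log (jap X) := rfl
      rw [hlogdS, hlog1y]
      ring
    rw [key]

lemma cpowR_mul_pos {t u : ℝ} (ht : 0 < t) (hu : 0 < u) (w : ℂ) :
    cpowR (t * u) w = cpowR t w * cpowR u w := by
  rw [cpowR, cpowR, cpowR, Real.log_mul ht.ne' hu.ne', ← Complex.exp_add]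
  push_cast; ring_nf
lemma cpowR_sqrt {t : ℝ} (h : 0 ≤ t) (s : ℂ) : cpowR (Real.sqrt t) (-2 * s) = cpowR t (-s) := by
  rw [cpowR, cpowR, Real.log_sqrt h]
  congr 1; push_cast; ring
lemma cpowR_one_sub {t : ℝ} (ht : 0 < t) (s : ℂ) :
    cpowR t (1 - s) = t * cpowR t (-s) := by
  rw [cpowR, cpowR, sub_eq_add_neg, add_mul, one_mul, Complex.exp_add]
  congr 1
  rw [← Complex.ofReal_exp, Real.exp_log ht]
lemma cpowR_cancel (t : ℝ) (s : ℂ) : cpowR t s * cpowR t (-s) = 1 := by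
  rw [cpowR, cpowR, ← Complex.exp_add]
  ring_nf
  exact Complex.exp_zero

lemma det_g (g : SL2R) : g.1 0 0 * g.1 1 1 - g.1 0 1 * g.1 1 0 = 1 := by
  have := g.2
  rw [Matrix.det_fin_two] at this
  linarith

lemma moebius_sub (g : SL2R) {x y : ℝ} (hx : g.1 1 0 * x + g.1 1 1 ≠ 0)
    (hy : g.1 1 0 * y + g.1 1 1 ≠ 0) :
    moebiusR g x - moebiusR g y = (x - y) / ((g.1 1 0 * x + g.1 1 1) * (g.1 1 0 * y + g.1 1 1)) := by
  have h := det_g g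
  rw [moebiusR, moebiusR]
  rw [div_sub_div _ _ hx hy]
  congr 1
  linear_combination (x - y) * h

lemma dMobSR_eq (g : SL2R) {y : ℝ} (hy : g.1 1 0 * y + g.1 1 1 ≠ 0) :
    dMobSR g y = (1 + y ^ 2) / ((g.1 1 0 * y + g.1 1 1) ^ 2 + (g.1 0 0 * y + g.1 0 1) ^ 2) := by
  have h := det_g g
  have h2 : (g.1 1 0 * y + g.1 1 1) * moebiusR g y = g.1 0 0 * y + g.1 0 1 := by
    rw [moebiusR]; field_simp
  rw [dMobSR, dMobR, jap_sq, jap_sq]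
  have h3 : 1 + moebiusR g y ^ 2 =
      ((g.1 1 0 * y + g.1 1 1) ^ 2 + (g.1 0 0 * y + g.1 0 1) ^ 2) / (g.1 1 0 * y + g.1 1 1) ^ 2 := by
    field_simp
    linear_combination ((g.1 1 0 * y + g.1 1 1) * moebiusR g y + (g.1 0 0 * y + g.1 0 1)) * h2
  rw [h3]
  have h4 : (g.1 1 0 * y + g.1 1 1) ^ 2 + (g.1 0 0 * y + g.1 0 1) ^ 2 ≠ 0 := by
    positivity
  field_simp
  rw [div_mul_cancel_left₀ (by rwa [mul_comm] at hy), one_div]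

lemma denom_pos (g : SL2R) (y : ℝ) :
    0 < (g.1 1 0 * y + g.1 1 1) ^ 2 + (g.1 0 0 * y + g.1 0 1) ^ 2 := by
  rcases eq_or_ne (g.1 1 0 * y + g.1 1 1) 0 with h | h
  · have hd := det_g g
    have : g.1 0 0 * y + g.1 0 1 ≠ 0 := by
      intro h2
      have hcon : (1:ℝ) = 0 := by
        linear_combination (-1 : ℝ) * hd + g.1 0 0 * h - g.1 1 0 * h2
      exact one_ne_zero hcon
    positivity
  · positivity

lemma dMobSR_pos (g : SL2R) {y : ℝ} (hy : g.1 1 0 * y + g.1 1 1 ≠ 0) :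
    0 < dMobSR g y := by
  rw [dMobSR_eq g hy]
  exact div_pos (by positivity) (denom_pos g y)

lemma dMobSR_le (g : SL2R) {y : ℝ} (hy : g.1 1 0 * y + g.1 1 1 ≠ 0) :
    dMobSR g y ≤ g.1 0 0 ^ 2 + g.1 0 1 ^ 2 + g.1 1 0 ^ 2 + g.1 1 1 ^ 2 := by
  rw [dMobSR_eq g hy, div_le_iff₀ (denom_pos g y)]
  have hd := det_g g
  set a := g.1 0 0; set b := g.1 0 1; set c := g.1 1 0; set d := g.1 1 1
  set u := c * y + d; set v := a * y + b
  have h1 : a * u - c * v = 1 := by simp only [u, v]; linear_combination hd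
  have h2 : d * v - b * u = y := by simp only [u, v]; linear_combination y * hd
  have h1sq : (a * u - c * v) ^ 2 = 1 := by rw [h1]; norm_num
  have h2sq : (d * v - b * u) ^ 2 = y ^ 2 := by rw [h2]
  have e1 : 1 ≤ (a^2 + c^2) * (u^2 + v^2) := by nlinarith [sq_nonneg (a*v + c*u), h1sq]
  have e2 : y^2 ≤ (b^2 + d^2) * (u^2 + v^2) := by nlinarith [sq_nonneg (d*u + b*v), h2sq]
  nlinarith [e1, e2, sq_nonneg u, sq_nonneg v]

lemma dS_moebius (g : SL2R) {x y : ℝ} (hx : g.1 1 0 * x + g.1 1 1 ≠ 0)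
    (hy : g.1 1 0 * y + g.1 1 1 ≠ 0) :
    dS (moebiusR g x) (moebiusR g y) = Real.sqrt (dMobSR g x * dMobSR g y) * dS x y := by
  have hMx : dMobSR g x = (jap x / (jap (moebiusR g x) * |g.1 1 0 * x + g.1 1 1|)) ^ 2 := by
    rw [dMobSR, dMobR, div_pow, mul_pow, _root_.sq_abs]
    have := (jap_pos (moebiusR g x)).ne'
    field_simp
  have hMy : dMobSR g y = (jap y / (jap (moebiusR g y) * |g.1 1 0 * y + g.1 1 1|)) ^ 2 := by
    rw [dMobSR, dMobR, div_pow, mul_pow, _root_.sq_abs]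
    have := (jap_pos (moebiusR g y)).ne'
    field_simp
  have hnn : 0 ≤ jap x / (jap (moebiusR g x) * |g.1 1 0 * x + g.1 1 1|) *
      (jap y / (jap (moebiusR g y) * |g.1 1 0 * y + g.1 1 1|)) :=
    mul_nonneg (div_nonneg (jap_pos x).le (mul_nonneg (jap_pos _).le (abs_nonneg _)))
      (div_nonneg (jap_pos y).le (mul_nonneg (jap_pos _).le (abs_nonneg _)))
  rw [hMx, hMy, ← mul_pow, Real.sqrt_sq hnn]
  rw [dS, dS, moebius_sub g hx hy, abs_div, abs_mul]
  have h1 := jap_pos x; have h2 := jap_pos y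
  have h3 := jap_pos (moebiusR g x); have h4 := jap_pos (moebiusR g y)
  have h5 : |g.1 1 0 * x + g.1 1 1| ≠ 0 := abs_ne_zero.2 hx
  have h6 : |g.1 1 0 * y + g.1 1 1| ≠ 0 := abs_ne_zero.2 hy
  field_simp


lemma measurable_linear (a b : ℝ) : Measurable (fun x : ℝ => a * x + b) :=
  (measurable_id.const_mul a).add_const b

lemma measurable_moebiusR (g : SL2R) : Measurable (moebiusR g) := by
  unfold moebiusR
  exact Measurable.div (measurable_linear _ _) (measurable_linear _ _)

lemma measurable_jap : Measurable jap :=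
  (Real.continuous_sqrt.comp (by continuity)).measurable

lemma measurable_dMobSR (g : SL2R) : Measurable (dMobSR g) := by
  unfold dMobSR dMobR
  apply Measurable.mul
  · exact ((measurable_jap.pow_const 2).div
      ((measurable_jap.comp (measurable_moebiusR g)).pow_const 2))
  · exact ((measurable_linear (g.1 1 0) (g.1 1 1)).inv).pow_const 2

lemma measurable_cpowR_comp {h : ℝ → ℝ} (hh : Measurable h) (w : ℂ) :
    Measurable (fun y => cpowR (h y) w) := by
  unfold cpowR
  exact Complex.measurable_exp.comp (measurable_const.mul
    (Complex.measurable_ofReal.comp (Real.measurable_log.comp hh)))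

/-- The pole set is measurable and null. -/
lemma poleSet_ae (g : SL2R) : ∀ᵐ y : ℝ ∂(volume : Measure ℝ), g.1 1 0 * y + g.1 1 1 ≠ 0 := by
  rw [ae_iff]
  simp only [not_not]
  rcases eq_or_ne (g.1 1 0) 0 with hc | hc
  · have hd : g.1 1 1 ≠ 0 := by
      intro hd
      have := det_g g
      rw [hc, hd] at this
      simp at this
    have : {y : ℝ | g.1 1 0 * y + g.1 1 1 = 0} = ∅ := by
      ext y; simp [hc, hd]
    simp [this]
  · have : {y : ℝ | g.1 1 0 * y + g.1 1 1 = 0} ⊆ {-(g.1 1 1 / g.1 1 0)} := by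
      intro y hy
      simp only [mem_setOf_eq] at hy
      simp only [mem_singleton_iff]
      field_simp
      linarith
    exact measure_mono_null this (measure_singleton _)

lemma poleSet_meas (g : SL2R) : MeasurableSet {y : ℝ | g.1 1 0 * y + g.1 1 1 ≠ 0} := by
  have : {y : ℝ | g.1 1 0 * y + g.1 1 1 ≠ 0}
      = (fun y : ℝ => g.1 1 0 * y + g.1 1 1) ⁻¹' ({0}ᶜ) := rfl
  rw [this]
  exact measurable_linear (g.1 1 0) (g.1 1 1) (measurableSet_singleton 0).compl

/-- Surjectivity of the Möbius map off the pole/image-pole. -/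
lemma moebius_image_ae (g : SL2R) :
    ∀ᵐ z : ℝ ∂(volume : Measure ℝ),
      z ∈ moebiusR g '' {y : ℝ | g.1 1 0 * y + g.1 1 1 ≠ 0} := by
  have hdet := det_g g
  have key : ∀ z : ℝ, (g.1 0 0 - g.1 1 0 * z ≠ 0) →
      z ∈ moebiusR g '' {y : ℝ | g.1 1 0 * y + g.1 1 1 ≠ 0} := by
    intro z hz
    refine ⟨(g.1 1 1 * z - g.1 0 1) / (g.1 0 0 - g.1 1 0 * z), ?_, ?_⟩
    · have hcalc : g.1 1 0 * ((g.1 1 1 * z - g.1 0 1) / (g.1 0 0 - g.1 1 0 * z)) + g.1 1 1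
          = 1 / (g.1 0 0 - g.1 1 0 * z) := by
        field_simp
        linear_combination hdet
      simp only [mem_setOf_eq, hcalc]
      exact one_div_ne_zero hz
    · have hcalc : g.1 1 0 * ((g.1 1 1 * z - g.1 0 1) / (g.1 0 0 - g.1 1 0 * z)) + g.1 1 1
          = 1 / (g.1 0 0 - g.1 1 0 * z) := by
        field_simp
        linear_combination hdet
      have hcalc2 : g.1 0 0 * ((g.1 1 1 * z - g.1 0 1) / (g.1 0 0 - g.1 1 0 * z)) + g.1 0 1
          = z / (g.1 0 0 - g.1 1 0 * z) := by
        rw [mul_div_assoc', div_add' _ _ _ hz]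
        congr 1
        linear_combination z * hdet
      rw [moebiusR, hcalc, hcalc2]
      field_simp
      exact mul_div_cancel_right₀ z (by rwa [mul_comm] at hz)
  rw [ae_iff]
  have hsub : {z : ℝ | ¬ z ∈ moebiusR g '' {y : ℝ | g.1 1 0 * y + g.1 1 1 ≠ 0}}
      ⊆ {z : ℝ | g.1 0 0 - g.1 1 0 * z = 0} := by
    intro z hz
    simp only [mem_setOf_eq] at hz ⊢
    by_contra hne
    exact hz (key z hne)
  refine measure_mono_null hsub ?_
  · rcases eq_or_ne (g.1 1 0) 0 with hc | hc
    · have ha : g.1 0 0 ≠ 0 := by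
        intro ha
        rw [hc, ha] at hdet
        simp at hdet
      have : {z : ℝ | g.1 0 0 - g.1 1 0 * z = 0} = ∅ := by
        ext z; simp [hc, ha]
      simp [this]
    · refine measure_mono_null (fun z hz => ?_) (measure_singleton (g.1 0 0 / g.1 1 0))
      simp only [mem_setOf_eq] at hz
      simp only [mem_singleton_iff]
      field_simp
      linarith

lemma moebius_injOn (g : SL2R) :
    InjOn (moebiusR g) {y : ℝ | g.1 1 0 * y + g.1 1 1 ≠ 0} := by
  intro y1 h1 y2 h2 heq
  simp only [mem_setOf_eq] at h1 h2
  have := moebius_sub g h1 h2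
  rw [heq, sub_self] at this
  have h3 : y1 - y2 = 0 := by
    by_contra hne
    have := this.symm
    rw [div_eq_zero_iff] at this
    rcases this with h | h
    · exact hne h
    · exact (mul_ne_zero h1 h2) h
  linarith

lemma moebius_hasDeriv (g : SL2R) {y : ℝ} (hy : g.1 1 0 * y + g.1 1 1 ≠ 0) :
    HasDerivAt (moebiusR g) (dMobR g y) y := by
  have hdet := det_g g
  have h1 : HasDerivAt (fun y : ℝ => g.1 0 0 * y + g.1 0 1) (g.1 0 0) y := by
    simpa using ((hasDerivAt_id y).const_mul (g.1 0 0)).add_const (g.1 0 1)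
  have h2 : HasDerivAt (fun y : ℝ => g.1 1 0 * y + g.1 1 1) (g.1 1 0) y := by
    simpa using ((hasDerivAt_id y).const_mul (g.1 1 0)).add_const (g.1 1 1)
  have := h1.div h2 hy
  have heq : g.1 0 0 * (g.1 1 0 * y + g.1 1 1) - (g.1 0 0 * y + g.1 0 1) * g.1 1 0 = 1 := by
    linear_combination hdet
  rw [heq] at this
  refine this.congr_deriv ?_
  rw [dMobR, inv_pow, one_div]

/-- Change of variables for the Möbius map. -/
lemma integral_moebius (g : SL2R) (G : ℝ → ℂ) :
    ∫ z, G z = ∫ y in {y : ℝ | g.1 1 0 * y + g.1 1 1 ≠ 0},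
      |dMobR g y| • G (moebiusR g y) := by
  set S := {y : ℝ | g.1 1 0 * y + g.1 1 1 ≠ 0} with hS
  have hSmeas : MeasurableSet S := poleSet_meas g
  have hderiv : ∀ y ∈ S, HasDerivWithinAt (moebiusR g) (dMobR g y) S y :=
    fun y hy => (moebius_hasDeriv g hy).hasDerivWithinAt
  have hinj := moebius_injOn g
  have hcov := integral_image_eq_integral_abs_deriv_smul hSmeas hderiv hinj G
  rw [← hcov]
  have : (volume : Measure ℝ).restrict (moebiusR g '' S) = volume :=
    Measure.restrict_eq_self_of_ae_mem (moebius_image_ae g)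
  rw [this]

/-- The pointwise identity under the substitution. -/
lemma pointwise_identity (g : SL2R) (s : ℂ) (f : ℝ → ℂ) {x y : ℝ}
    (hx : g.1 1 0 * x + g.1 1 1 ≠ 0) (hy : g.1 1 0 * y + g.1 1 1 ≠ 0) (hxy : x ≠ y) :
    |dMobR g y| • ((2 / (1 + (moebiusR g y) ^ 2)) •
        (cpowR (dS (moebiusR g x) (moebiusR g y)) (-2 * s) * f (moebiusR g y)))
    = cpowR (dMobSR g x) (-s) * ((2 / (1 + y ^ 2)) •
        (cpowR (dS x y) (-2 * s) * (cpowR (dMobSR g y) (1 - s) * f (moebiusR g y)))) := by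
  have hMx := dMobSR_pos g hx
  have hMy := dMobSR_pos g hy
  have hdSxy := dS_pos hxy
  -- kernel factorization
  have hker : cpowR (dS (moebiusR g x) (moebiusR g y)) (-2 * s)
      = cpowR (dMobSR g x) (-s) * cpowR (dMobSR g y) (-s) * cpowR (dS x y) (-2 * s) := by
    rw [dS_moebius g hx hy,
      cpowR_mul_pos (Real.sqrt_pos.2 (mul_pos hMx hMy)) hdSxy,
      cpowR_sqrt (mul_pos hMx hMy).le, cpowR_mul_pos hMx hMy]
  -- density factorization
  have hdens : |dMobR g y| * (2 / (1 + (moebiusR g y) ^ 2)) = dMobSR g y * (2 / (1 + y ^ 2)) := by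
    have h1 : 0 ≤ dMobR g y := by rw [dMobR]; positivity
    rw [_root_.abs_of_nonneg h1, dMobSR, jap_sq, jap_sq]
    have h2 : (0:ℝ) < 1 + y^2 := by positivity
    have h3 : (0:ℝ) < 1 + (moebiusR g y)^2 := by positivity
    field_simp
  -- (1-s) power
  have hpow : (dMobSR g y : ℂ) * cpowR (dMobSR g y) (-s) = cpowR (dMobSR g y) (1 - s) :=
    (cpowR_one_sub hMy s).symm
  rw [hker]
  rw [Complex.real_smul, Complex.real_smul, Complex.real_smul]
  have hcast : ((|dMobR g y| : ℝ) : ℂ) * ((2 / (1 + (moebiusR g y) ^ 2) : ℝ) : ℂ)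
      = (dMobSR g y : ℂ) * ((2 / (1 + y ^ 2) : ℝ) : ℂ) := by
    rw [← Complex.ofReal_mul, ← Complex.ofReal_mul, hdens]
  calc ((|dMobR g y| : ℝ) : ℂ) * (((2 / (1 + (moebiusR g y) ^ 2) : ℝ) : ℂ) *
        (cpowR (dMobSR g x) (-s) * cpowR (dMobSR g y) (-s) * cpowR (dS x y) (-2 * s) *
          f (moebiusR g y)))
      = (((|dMobR g y| : ℝ) : ℂ) * ((2 / (1 + (moebiusR g y) ^ 2) : ℝ) : ℂ)) *
        (cpowR (dMobSR g x) (-s) * cpowR (dMobSR g y) (-s) * cpowR (dS x y) (-2 * s) *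
          f (moebiusR g y)) := by ring
    _ = (((dMobSR g y : ℝ) : ℂ) * ((2 / (1 + y ^ 2) : ℝ) : ℂ)) *
        (cpowR (dMobSR g x) (-s) * cpowR (dMobSR g y) (-s) * cpowR (dS x y) (-2 * s) *
          f (moebiusR g y)) := by rw [hcast]
    _ = cpowR (dMobSR g x) (-s) * (((2 / (1 + y ^ 2) : ℝ) : ℂ) *
        (cpowR (dS x y) (-2 * s) * ((((dMobSR g y : ℝ) : ℂ) * cpowR (dMobSR g y) (-s)) *
          f (moebiusR g y)))) := by ring
    _ = _ := by rw [hpow]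

end Stmt6Lemmas

/-- Equivariance of `B(s)`: for `γ ∈ SL(2,ℝ)`, `Re s < 1/2`, `f` bounded
measurable and `x` away from the pole, the integrals defining `(B(s)f)(γ(x))` and `(B(s)g)(x)`
converge absolutely, where `g(x') = |γ'(x')|_S^{1−s} f(γ(x'))`, and
`|γ'(x)|_S^s (B(s)f)(γ(x)) = (B(s)g)(x)`. -/
theorem stmt6 (g : SL2R) (s : ℂ) (hs : s.re < 1 / 2) (f : ℝ → ℂ)
    (hfm : Measurable f) (M : ℝ) (hfb : ∀ x, ‖f x‖ ≤ M) (x : ℝ)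
    (hx : g.1 1 0 * x + g.1 1 1 ≠ 0) :
    Integrable (fun y => cpowR (dS (moebiusR g x) y) (-2 * s) * f y) muP ∧
    Integrable (fun y => cpowR (dS x y) (-2 * s) *
      (if g.1 1 0 * y + g.1 1 1 = 0 then 0
       else cpowR (dMobSR g y) (1 - s) * f (moebiusR g y))) muP ∧
    cpowR (dMobSR g x) s * Bop s f (moebiusR g x)
      = Bop s (fun y => if g.1 1 0 * y + g.1 1 1 = 0 then 0
          else cpowR (dMobSR g y) (1 - s) * f (moebiusR g y)) x := by
  have hM0 : 0 ≤ M := le_trans (norm_nonneg (f 0)) (hfb 0)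
  set B : ℝ → ℂ := fun y => if g.1 1 0 * y + g.1 1 1 = 0 then 0
      else cpowR (dMobSR g y) (1 - s) * f (moebiusR g y) with hBdef
  have hpolemeas : MeasurableSet {y : ℝ | g.1 1 0 * y + g.1 1 1 = 0} :=
    measurable_linear (g.1 1 0) (g.1 1 1) (measurableSet_singleton 0)
  have hBmeas : Measurable B := by
    rw [hBdef]
    exact Measurable.ite hpolemeas measurable_const
      ((measurable_cpowR_comp (measurable_dMobSR g) _).mul (hfm.comp (measurable_moebiusR g)))
  set K : ℝ := g.1 0 0 ^ 2 + g.1 0 1 ^ 2 + g.1 1 0 ^ 2 + g.1 1 1 ^ 2 with hKdef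
  have hBbdd : ∀ y, ‖B y‖ ≤ Real.exp ((1 - s).re * Real.log K) * M := by
    intro y
    by_cases h : g.1 1 0 * y + g.1 1 1 = 0
    · simp only [hBdef, if_pos h, norm_zero]
      positivity
    · simp only [hBdef, if_neg h, norm_mul, norm_cpowR]
      have h1 := dMobSR_pos g h
      have h2 := dMobSR_le g h
      have h3 : 0 ≤ (1 - s).re := by
        simp only [Complex.sub_re, Complex.one_re]
        linarith
      refine mul_le_mul ?_ (hfb _) (norm_nonneg _) (Real.exp_nonneg _)
      exact Real.exp_le_exp.2 (mul_le_mul_of_nonneg_left (Real.log_le_log h1 h2) h3)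
  have hint1 : Integrable (fun y => cpowR (dS (moebiusR g x) y) (-2 * s) * f y) muP := by
    have h := (integrable_kernel s hs (moebiusR g x)).bdd_mul hfm.aestronglyMeasurable (ae_of_all _ hfb)
    exact h.congr (ae_of_all _ fun y => mul_comm _ _)
  have hint2 : Integrable (fun y => cpowR (dS x y) (-2 * s) * B y) muP := by
    have h := (integrable_kernel s hs x).bdd_mul hBmeas.aestronglyMeasurable
      (c := Real.exp ((1 - s).re * Real.log K) * M) (ae_of_all _ hBbdd)
    exact h.congr (ae_of_all _ fun y => mul_comm _ _)
  refine ⟨hint1, hint2, ?_⟩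
  -- the equivariance identity
  set S : Set ℝ := {y : ℝ | g.1 1 0 * y + g.1 1 1 ≠ 0} with hSdef
  have hSmeas : MeasurableSet S := poleSet_meas g
  have hSres : (volume : Measure ℝ).restrict S = volume :=
    Measure.restrict_eq_self_of_ae_mem (poleSet_ae g)
  have hxae : ∀ᵐ y : ℝ ∂(volume : Measure ℝ), y ≠ x := by
    rw [ae_iff]
    have : {y : ℝ | ¬ y ≠ x} = {x} := by ext t; simp
    rw [this]
    exact measure_singleton x
  have hI1 : (∫ y, cpowR (dS (moebiusR g x) y) (-2 * s) * f y ∂muP)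
      = cpowR (dMobSR g x) (-s) * ∫ y, cpowR (dS x y) (-2 * s) * B y ∂muP := by
    rw [integral_muP]
    rw [integral_moebius g (fun z => (2 / (1 + z ^ 2)) •
      (cpowR (dS (moebiusR g x) z) (-2 * s) * f z))]
    have hcong : (∫ y in S, |dMobR g y| • ((2 / (1 + (moebiusR g y) ^ 2)) •
          (cpowR (dS (moebiusR g x) (moebiusR g y)) (-2 * s) * f (moebiusR g y))))
        = ∫ y in S, cpowR (dMobSR g x) (-s) * ((2 / (1 + y ^ 2)) •
          (cpowR (dS x y) (-2 * s) * B y)) := by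
      refine integral_congr_ae ?_
      filter_upwards [ae_restrict_mem hSmeas, ae_restrict_of_ae hxae] with y hyS hyx
      have hy : g.1 1 0 * y + g.1 1 1 ≠ 0 := hyS
      have hBy : B y = cpowR (dMobSR g y) (1 - s) * f (moebiusR g y) := by
        rw [hBdef]; exact if_neg hy
      rw [hBy]
      exact pointwise_identity g s f hx hy (Ne.symm hyx)
    rw [hcong, hSres, integral_const_mul]
    congr 1
    exact (integral_muP _).symm
  rw [Bop, Bop, hI1]
  have hcancel := cpowR_cancel (dMobSR g x) s
  calc cpowR (dMobSR g x) s * (((Real.sqrt (|s.im| / (2 * π)) : ℝ) : ℂ) *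
        (cpowR (dMobSR g x) (-s) * ∫ y, cpowR (dS x y) (-2 * s) * B y ∂muP))
      = (cpowR (dMobSR g x) s * cpowR (dMobSR g x) (-s)) *
        (((Real.sqrt (|s.im| / (2 * π)) : ℝ) : ℂ) *
          ∫ y, cpowR (dS x y) (-2 * s) * B y ∂muP) := by ring
    _ = ((Real.sqrt (|s.im| / (2 * π)) : ℝ) : ℂ) *
          ∫ y, cpowR (dS x y) (-2 * s) * B y ∂muP := by rw [hcancel, one_mul]
end
end
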